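/- arXiv:2204.12462 — 6 statements merged into one kernel-verified Lean document; each statement's English description precedes it below -/
import Mathlib

section
/- Let E be a real normed vector space and let p be a natural number. Fix W ≥ 0 and r̄ ≥ 0. Let J be a nonempty finite index set, and for each j ∈ J let η_j : E → ℝ be a continuous linear functional with operator norm ‖η_j‖ ≤ W, let c_j ∈ ℝ, let π_j > 0, and let r_j ∈ EuclideanSpace ℝ (Fin p) with ‖r_j‖ ≤ r̄. Define f : E → EuclideanSpace ℝ (Fin p) by f(w) = (∑_{j∈J} π_j · exp(η_j(w) − c_j) · r_j) / (∑_{j∈J} π_j · exp(η_j(w) − c_j)). Then f is Lipschitz with constant r̄·√p·W, i.e. ‖f(w) − f(w')‖ ≤ r̄·√p·W·‖w − w'‖ for all w, w' ∈ E. -/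
open scoped BigOperators

-- Cauchy–Schwarz covariance bound for finite probability weights
lemma cov_abs_le {J : Type*} [Fintype J] (q X Y : J → ℝ) (hq : ∀ j, 0 ≤ q j)
    (hsum : ∑ j, q j = 1) (BX BY : ℝ) (hBX : 0 ≤ BX) (hBY : 0 ≤ BY)
    (hX : ∀ j, |X j| ≤ BX) (hY : ∀ j, |Y j| ≤ BY) :
    |∑ j, q j * (X j * Y j) - (∑ j, q j * X j) * (∑ j, q j * Y j)| ≤ BX * BY := by
  classical
  set mX := ∑ j, q j * X j with hmX
  set mY := ∑ j, q j * Y j with hmY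
  have key : ∑ j, q j * (X j * Y j) - mX * mY
      = ∑ j, q j * ((X j - mX) * (Y j - mY)) := by
    have expand : ∀ j, q j * ((X j - mX) * (Y j - mY))
        = q j * (X j * Y j) - mY * (q j * X j) - mX * (q j * Y j) + mX * mY * q j := by
      intro j; ring
    rw [Finset.sum_congr rfl fun j _ => expand j]
    rw [Finset.sum_add_distrib, Finset.sum_sub_distrib, Finset.sum_sub_distrib,
      ← Finset.mul_sum, ← Finset.mul_sum, ← Finset.mul_sum, hsum, ← hmX, ← hmY]
    ring
  have cs := Finset.sum_mul_sq_le_sq_mul_sq Finset.univ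
    (fun j => Real.sqrt (q j) * (X j - mX)) (fun j => Real.sqrt (q j) * (Y j - mY))
  have e1 : ∀ j, (Real.sqrt (q j) * (X j - mX)) * (Real.sqrt (q j) * (Y j - mY))
      = q j * ((X j - mX) * (Y j - mY)) := by
    intro j
    have h : Real.sqrt (q j) * Real.sqrt (q j) = q j := Real.mul_self_sqrt (hq j)
    calc Real.sqrt (q j) * (X j - mX) * (Real.sqrt (q j) * (Y j - mY))
        = (Real.sqrt (q j) * Real.sqrt (q j)) * ((X j - mX) * (Y j - mY)) := by ring
      _ = q j * ((X j - mX) * (Y j - mY)) := by rw [h]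
  have e2 : ∀ j, (Real.sqrt (q j) * (X j - mX)) ^ 2 = q j * (X j - mX) ^ 2 := by
    intro j
    rw [mul_pow, Real.sq_sqrt (hq j)]
  have e3 : ∀ j, (Real.sqrt (q j) * (Y j - mY)) ^ 2 = q j * (Y j - mY) ^ 2 := by
    intro j
    rw [mul_pow, Real.sq_sqrt (hq j)]
  rw [Finset.sum_congr rfl fun j _ => e1 j, Finset.sum_congr rfl fun j _ => e2 j,
    Finset.sum_congr rfl fun j _ => e3 j] at cs
  -- variance bounds
  have varX : ∑ j, q j * (X j - mX) ^ 2 ≤ BX ^ 2 := by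
    have expand : ∀ j, q j * (X j - mX) ^ 2
        = q j * (X j)^2 - 2 * mX * (q j * X j) + mX ^ 2 * q j := by intro j; ring
    rw [Finset.sum_congr rfl fun j _ => expand j, Finset.sum_add_distrib,
      Finset.sum_sub_distrib, ← Finset.mul_sum, ← Finset.mul_sum, hsum, ← hmX]
    have hb : ∑ j, q j * (X j) ^ 2 ≤ BX ^ 2 := by
      calc ∑ j, q j * (X j) ^ 2 ≤ ∑ j, q j * BX ^ 2 := by
            apply Finset.sum_le_sum
            intro j _
            have : (X j) ^ 2 ≤ BX ^ 2 := by
              have := hX j; nlinarith [abs_nonneg (X j), sq_abs (X j)]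
            exact mul_le_mul_of_nonneg_left this (hq j)
        _ = BX ^ 2 := by rw [← Finset.sum_mul, hsum, one_mul]
    nlinarith [sq_nonneg mX]
  have varY : ∑ j, q j * (Y j - mY) ^ 2 ≤ BY ^ 2 := by
    have expand : ∀ j, q j * (Y j - mY) ^ 2
        = q j * (Y j)^2 - 2 * mY * (q j * Y j) + mY ^ 2 * q j := by intro j; ring
    rw [Finset.sum_congr rfl fun j _ => expand j, Finset.sum_add_distrib,
      Finset.sum_sub_distrib, ← Finset.mul_sum, ← Finset.mul_sum, hsum, ← hmY]
    have hb : ∑ j, q j * (Y j) ^ 2 ≤ BY ^ 2 := by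
      calc ∑ j, q j * (Y j) ^ 2 ≤ ∑ j, q j * BY ^ 2 := by
            apply Finset.sum_le_sum
            intro j _
            have : (Y j) ^ 2 ≤ BY ^ 2 := by
              have := hY j; nlinarith [abs_nonneg (Y j), sq_abs (Y j)]
            exact mul_le_mul_of_nonneg_left this (hq j)
        _ = BY ^ 2 := by rw [← Finset.sum_mul, hsum, one_mul]
    nlinarith [sq_nonneg mY]
  have h0X : (0:ℝ) ≤ ∑ j, q j * (X j - mX) ^ 2 :=
    Finset.sum_nonneg fun j _ => mul_nonneg (hq j) (sq_nonneg _)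
  have h0Y : (0:ℝ) ≤ ∑ j, q j * (Y j - mY) ^ 2 :=
    Finset.sum_nonneg fun j _ => mul_nonneg (hq j) (sq_nonneg _)
  rw [key]
  set C := ∑ j, q j * ((X j - mX) * (Y j - mY)) with hC
  have hsq : C ^ 2 ≤ (BX * BY) ^ 2 := by nlinarith
  nlinarith [sq_abs C, abs_nonneg C, mul_nonneg hBX hBY]

lemma softmax_scalar_lipschitz
    {E : Type*} [NormedAddCommGroup E] [NormedSpace ℝ E]
    {J : Type*} [Fintype J] [Nonempty J]
    (W BX : ℝ) (hW : 0 ≤ W) (hBX : 0 ≤ BX)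
    (η : J → E →L[ℝ] ℝ) (hη : ∀ j, ‖η j‖ ≤ W)
    (c : J → ℝ) (pj : J → ℝ) (hpj : ∀ j, 0 < pj j)
    (X : J → ℝ) (hX : ∀ j, |X j| ≤ BX) (w w' : E) :
    |(∑ j, pj j * Real.exp (η j w - c j))⁻¹ * ∑ j, X j * (pj j * Real.exp (η j w - c j))
      - ((∑ j, pj j * Real.exp (η j w' - c j))⁻¹ *
        ∑ j, X j * (pj j * Real.exp (η j w' - c j)))| ≤ BX * W * ‖w - w'‖ := by
  classical
  set a : E → J → ℝ := fun v j => pj j * Real.exp (η j v - c j) with ha_def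
  have ha : ∀ v j, 0 < a v j := fun v j => mul_pos (hpj j) (Real.exp_pos _)
  set S : E → ℝ := fun v => ∑ j, a v j with hS_def
  have hS : ∀ v, 0 < S v := fun v => Finset.sum_pos (fun j _ => ha v j) Finset.univ_nonempty
  set g : E → ℝ := fun v => (S v)⁻¹ * ∑ j, X j * a v j with hg_def
  -- derivatives of a
  have haD : ∀ v j, HasFDerivAt (fun u => a u j) (a v j • (η j)) v := by
    intro v j
    have h1 : HasFDerivAt (fun u => η j u - c j) (η j) v :=
      ((η j).hasFDerivAt).sub_const (c j)
    have h3 := h1.exp.const_mul (pj j)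
    rw [smul_smul] at h3
    exact h3
  have hSD : ∀ v, HasFDerivAt S (∑ j, a v j • η j) v := by
    intro v
    exact HasFDerivAt.fun_sum (fun j _ => haD v j)
  have hND : ∀ v, HasFDerivAt (fun u => ∑ j, X j * a u j)
      (∑ j, X j • (a v j • η j)) v := by
    intro v
    exact HasFDerivAt.fun_sum (fun j _ => (haD v j).const_mul (X j))
  set D : E → (E →L[ℝ] ℝ) := fun v =>
    (S v)⁻¹ • (∑ j, X j • (a v j • η j)) +
      (∑ j, X j * a v j) •
        ((ContinuousLinearMap.smulRight (1 : ℝ →L[ℝ] ℝ) (-(S v ^ 2)⁻¹)).comp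
          (∑ j, a v j • η j)) with hD_def
  have hgD : ∀ v, HasFDerivAt g (D v) v := by
    intro v
    have hinv : HasFDerivAt (fun u => (S u)⁻¹)
        ((ContinuousLinearMap.smulRight (1 : ℝ →L[ℝ] ℝ) (-(S v ^ 2)⁻¹)).comp
          (∑ j, a v j • η j)) v :=
      (hasFDerivAt_inv (hS v).ne').comp v (hSD v)
    exact hinv.mul (hND v)
  -- bound on the derivative
  have hbound : ∀ v, ‖D v‖ ≤ BX * W := by
    intro v
    apply ContinuousLinearMap.opNorm_le_bound _ (mul_nonneg hBX hW)
    intro u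
    have happ : D v u = (∑ j, (a v j / S v) * (X j * η j u))
        - (∑ j, (a v j / S v) * X j) * (∑ j, (a v j / S v) * η j u) := by
      have hSne : S v ≠ 0 := (hS v).ne'
      have t1 : ∀ j, (a v j / S v) * (X j * η j u) = (S v)⁻¹ * (X j * (a v j * η j u)) := by
        intro j; field_simp
      have t2 : ∀ j, (a v j / S v) * X j = (S v)⁻¹ * (X j * a v j) := by
        intro j; field_simp
      have t3 : ∀ j, (a v j / S v) * η j u = (S v)⁻¹ * (a v j * η j u) := by
        intro j; field_simp
      rw [Finset.sum_congr rfl fun j _ => t1 j, Finset.sum_congr rfl fun j _ => t2 j,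
        Finset.sum_congr rfl fun j _ => t3 j, ← Finset.mul_sum, ← Finset.mul_sum,
        ← Finset.mul_sum]
      simp only [hD_def, ContinuousLinearMap.add_apply, ContinuousLinearMap.smul_apply,
        ContinuousLinearMap.coe_comp', Function.comp_apply, ContinuousLinearMap.sum_apply,
        ContinuousLinearMap.smulRight_apply, ContinuousLinearMap.one_apply, smul_eq_mul]
      generalize (∑ j, X j * (a v j * η j u)) = A1
      generalize hA2 : (∑ j, a v j * η j u) = A2
      generalize (∑ j, X j * a v j) = A3
      field_simp
      ring
    rw [happ]
    have hq : ∀ j, 0 ≤ a v j / S v := fun j => le_of_lt (div_pos (ha v j) (hS v))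
    have hqs : ∑ j, a v j / S v = 1 := by
      rw [← Finset.sum_div, div_self (hS v).ne']
    have hYb : ∀ j, |η j u| ≤ W * ‖u‖ := by
      intro j
      calc |η j u| ≤ ‖η j‖ * ‖u‖ := (η j).le_opNorm u
        _ ≤ W * ‖u‖ := mul_le_mul_of_nonneg_right (hη j) (norm_nonneg u)
    have := cov_abs_le (fun j => a v j / S v) X (fun j => η j u) hq hqs BX (W * ‖u‖)
      hBX (mul_nonneg hW (norm_nonneg u)) hX hYb
    calc ‖(∑ j, (a v j / S v) * (X j * η j u))
        - (∑ j, (a v j / S v) * X j) * (∑ j, (a v j / S v) * η j u)‖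
        ≤ BX * (W * ‖u‖) := by rw [Real.norm_eq_abs]; exact this
      _ = BX * W * ‖u‖ := by ring
  -- mean value theorem
  have key : ‖g w - g w'‖ ≤ BX * W * ‖w - w'‖ :=
    Convex.norm_image_sub_le_of_norm_hasFDerivWithin_le
      (fun x _ => (hgD x).hasFDerivWithinAt) (fun x _ => hbound x)
      convex_univ (Set.mem_univ w') (Set.mem_univ w)
  simpa [hg_def, hS_def, ha_def, Real.norm_eq_abs] using key

lemma euclidean_abs_coord_le_norm {p : ℕ} (x : EuclideanSpace ℝ (Fin p)) (k : Fin p) :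
    |x k| ≤ ‖x‖ := by
  rw [EuclideanSpace.norm_eq]
  rw [show |x k| = Real.sqrt (|x k| ^ 2) from (Real.sqrt_sq (abs_nonneg _)).symm]
  apply Real.sqrt_le_sqrt
  have := Finset.single_le_sum (f := fun i => ‖x i‖ ^ 2)
    (fun i _ => sq_nonneg _) (Finset.mem_univ k)
  simpa [Real.norm_eq_abs, sq_abs] using this

/-- Bayes posterior means under finitely supported priors with likelihood-ratio
functionals bounded in dual norm by `W` and estimand bounded by `rbar` are
Lipschitz with constant `rbar * √p * W`. -/
theorem softmax_posterior_mean_lipschitz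
    {E : Type*} [NormedAddCommGroup E] [NormedSpace ℝ E]
    (p : ℕ) (W rbar : ℝ) (hW : 0 ≤ W) (hrbar : 0 ≤ rbar)
    {J : Type*} [Fintype J] [Nonempty J]
    (η : J → E →L[ℝ] ℝ) (hη : ∀ j, ‖η j‖ ≤ W)
    (c : J → ℝ) (pj : J → ℝ) (hpj : ∀ j, 0 < pj j)
    (r : J → EuclideanSpace ℝ (Fin p)) (hr : ∀ j, ‖r j‖ ≤ rbar)
    (f : E → EuclideanSpace ℝ (Fin p))
    (hf : ∀ w, f w = (∑ j, pj j * Real.exp (η j w - c j))⁻¹ •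
      ∑ j, (pj j * Real.exp (η j w - c j)) • r j) :
    ∀ w w' : E, ‖f w - f w'‖ ≤ rbar * Real.sqrt p * W * ‖w - w'‖ := by
  intro w w'
  have hfk : ∀ (v : E) (k : Fin p), f v k =
      (∑ j, pj j * Real.exp (η j v - c j))⁻¹ *
        ∑ j, r j k * (pj j * Real.exp (η j v - c j)) := by
    intro v k
    rw [hf]
    have hsum : ∀ (g : J → EuclideanSpace ℝ (Fin p)), (∑ x, g x) k = ∑ x, g x k :=
      fun g => by rw [WithLp.ofLp_sum, Finset.sum_apply]
    simp only [PiLp.smul_apply, hsum, smul_eq_mul]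
    congr 1
    apply Finset.sum_congr rfl
    intro j _
    ring
  have coord : ∀ k : Fin p, |f w k - f w' k| ≤ rbar * W * ‖w - w'‖ := by
    intro k
    rw [hfk w k, hfk w' k]
    exact softmax_scalar_lipschitz W rbar hW hrbar η hη c pj hpj (fun j => r j k)
      (fun j => (euclidean_abs_coord_le_norm (r j) k).trans (hr j)) w w'
  have hnn : (0:ℝ) ≤ rbar * W * ‖w - w'‖ := by positivity
  calc ‖f w - f w'‖ = Real.sqrt (∑ k, ‖f w k - f w' k‖ ^ 2) := by
        rw [EuclideanSpace.norm_eq]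
        rfl
    _ ≤ Real.sqrt (∑ _k : Fin p, (rbar * W * ‖w - w'‖) ^ 2) := by
        apply Real.sqrt_le_sqrt
        apply Finset.sum_le_sum
        intro k _
        rw [Real.norm_eq_abs]
        exact pow_le_pow_left₀ (abs_nonneg _) (coord k) 2
    _ = Real.sqrt ((p : ℝ) * (rbar * W * ‖w - w'‖) ^ 2) := by
        rw [Finset.sum_const, Finset.card_univ, Fintype.card_fin, nsmul_eq_mul]
    _ = Real.sqrt p * (rbar * W * ‖w - w'‖) := by
        rw [Real.sqrt_mul (Nat.cast_nonneg p), Real.sqrt_sq hnn]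
    _ = rbar * Real.sqrt p * W * ‖w - w'‖ := by ring
end

section
/- Let E and F be real normed vector spaces, and let S ⊆ E be a set closed under multiplication by positive scalars (c • x ∈ S whenever c > 0 and x ∈ S). Suppose δ : E → F is K-Lipschitz on S for some constant K ≥ 0 and is scale-invariant on S, meaning δ(c • x) = δ(x) for all c > 0 and all x ∈ S. Then δ is constant on S: δ(x) = δ(x') for all x, x' ∈ S. -/
/-- A scale-invariant function that is Lipschitz on a set closed under positive
scalar multiplication must be constant on that set. -/
theorem scale_invariant_lipschitz_const
    {E F : Type*} [NormedAddCommGroup E] [NormedSpace ℝ E]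
    [NormedAddCommGroup F] [NormedSpace ℝ F]
    (S : Set E) (hS : ∀ c : ℝ, 0 < c → ∀ x ∈ S, c • x ∈ S)
    (δ : E → F) (K : ℝ) (hK : 0 ≤ K)
    (hLip : ∀ x ∈ S, ∀ y ∈ S, ‖δ x - δ y‖ ≤ K * ‖x - y‖)
    (hinv : ∀ c : ℝ, 0 < c → ∀ x ∈ S, δ (c • x) = δ x) :
    ∀ x ∈ S, ∀ y ∈ S, δ x = δ y := by
  intro x hx y hy
  have key : ∀ c : ℝ, 0 < c → ‖δ x - δ y‖ ≤ c * (K * ‖x - y‖) := by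
    intro c hc
    have h1 : ‖δ (c • x) - δ (c • y)‖ ≤ K * ‖c • x - c • y‖ :=
      hLip _ (hS c hc x hx) _ (hS c hc y hy)
    rw [hinv c hc x hx, hinv c hc y hy] at h1
    calc ‖δ x - δ y‖ ≤ K * ‖c • x - c • y‖ := h1
      _ = c * (K * ‖x - y‖) := by
          rw [← smul_sub, norm_smul, Real.norm_eq_abs, abs_of_pos hc]; ring
  have hnonneg : 0 ≤ K * ‖x - y‖ := mul_nonneg hK (norm_nonneg _)
  have : ‖δ x - δ y‖ ≤ 0 := by
    by_contra h
    push_neg at h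
    rcases eq_or_lt_of_le hnonneg with h0 | h0
    · have := key 1 one_pos
      rw [← h0, mul_zero] at this
      linarith
    · set M := K * ‖x - y‖
      have hc : (0:ℝ) < ‖δ x - δ y‖ / (2 * M) := by positivity
      have := key _ hc
      rw [div_mul_eq_mul_div, mul_div_assoc] at this
      have hM : M / (2 * M) = 1/2 := by field_simp
      rw [hM] at this
      linarith
  have := norm_nonneg (δ x - δ y)
  have hz : ‖δ x - δ y‖ = 0 := le_antisymm ‹_› ‹_›
  exact sub_eq_zero.mp (norm_eq_zero.mp hz)
end

section
/- Let p, q be positive natural numbers, let ā ≥ 0, and let φ_q denote the standard Gaussian density on EuclideanSpace ℝ (Fin q), i.e. φ_q(z) = (2π)^{−q/2} · exp(−‖z‖²/2). Let γ : EuclideanSpace ℝ (Fin q) → EuclideanSpace ℝ (Fin p) be measurable with ‖γ(υ)‖ ≤ ā for all υ. Then the function γ^B(y) = ∫ γ(υ) · φ_q(υ − y) dυ (Bochner integral with respect to Lebesgue measure) is Lipschitz with constant ā·√p: ‖γ^B(y) − γ^B(ỹ)‖ ≤ ā·√p·‖y − ỹ‖ for all y, ỹ. -/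
open MeasureTheory Real

local notation "E" q => EuclideanSpace ℝ (Fin q)
local notation "⟪" x ", " y "⟫" => @inner ℝ _ _ x y

lemma gauss_integrable (q : ℕ) :
    Integrable (fun v : E q => Real.exp (-‖v‖ ^ 2 / 2)) := by
  have h := (GaussianFourier.integrable_cexp_neg_mul_sq_norm_add
    (V := E q) (b := (1/2 : ℂ)) (by norm_num) 0 0).norm
  convert h using 2 with v
  simp [Complex.norm_exp]
  norm_num
  rw [← Complex.ofReal_pow, Complex.ofReal_re]
  ring

lemma gauss_integral (q : ℕ) :
    ∫ v : E q, Real.exp (-‖v‖ ^ 2 / 2) = (2 * π) ^ ((q : ℝ) / 2) := by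
  have h := GaussianFourier.integral_rexp_neg_mul_sq_norm (V := E q) (b := (1/2:ℝ)) (by norm_num)
  simp only [finrank_euclideanSpace_fin] at h
  have e : (fun v : E q => rexp (-‖v‖^2/2)) = fun v => rexp (-(1/2)*‖v‖^2) := by
    funext v; ring_nf
  rw [e, h]
  norm_num
  ring_nf

lemma mgf_eq {q : ℕ} (h : E q) (r : ℝ) (v : E q) :
    Real.exp (r * ⟪v, h⟫ - ‖v‖ ^ 2 / 2)
      = Real.exp (r ^ 2 * ‖h‖ ^ 2 / 2) * Real.exp (-‖v - r • h‖ ^ 2 / 2) := by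
  rw [← Real.exp_add]
  congr 1
  rw [norm_sub_sq_real, real_inner_smul_right, norm_smul]
  simp only [Real.norm_eq_abs, mul_pow, sq_abs]
  ring

lemma mgf_integrable {q : ℕ} (h : E q) (r : ℝ) :
    Integrable (fun v : E q => Real.exp (r * ⟪v, h⟫ - ‖v‖ ^ 2 / 2)) := by
  simp_rw [mgf_eq h r]
  exact (((gauss_integrable q).comp_sub_right (r • h))).const_mul _

lemma mgf_integral {q : ℕ} (h : E q) (r : ℝ) :
    ∫ v : E q, Real.exp (r * ⟪v, h⟫ - ‖v‖ ^ 2 / 2)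
      = Real.exp (r ^ 2 * ‖h‖ ^ 2 / 2) * (2 * π) ^ ((q : ℝ) / 2) := by
  simp_rw [mgf_eq h r]
  rw [integral_const_mul, integral_sub_right_eq_self
    (fun v : E q => Real.exp (-‖v‖ ^ 2 / 2)) (r • h), gauss_integral]

lemma scalar_bound {s t : ℝ} (hs : 0 < s) (ht : 0 < t) (x : ℝ) :
    |x| ≤ (Real.exp (t * x) + Real.exp (-(t * x)) - 2) / (2 * s * t ^ 2) + s / 2 := by
  have h1 : |x| ≤ x ^ 2 / (2 * s) + s / 2 := by
    have key : 2 * s * |x| ≤ x ^ 2 + s ^ 2 := by nlinarith [sq_nonneg (|x| - s), sq_abs x]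
    calc |x| = (2 * s * |x|) / (2 * s) := by field_simp
      _ ≤ (x ^ 2 + s ^ 2) / (2 * s) := by gcongr
      _ = x ^ 2 / (2 * s) + s / 2 := by field_simp
  have hz : t ^ 2 * x ^ 2 ≤ Real.exp (t * x) + Real.exp (-(t * x)) - 2 := by
    have hc : Real.cosh (t * x) = 1 + 2 * Real.sinh (t * x / 2) ^ 2 := by
      have := Real.cosh_two_mul (t * x / 2)
      rw [show 2 * (t * x / 2) = t * x by ring] at this
      rw [this, Real.cosh_sq']
      ring
    have hsinh : (t * x / 2) ^ 2 ≤ Real.sinh (t * x / 2) ^ 2 := by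
      have h1 : |t * x / 2| ≤ |Real.sinh (t * x / 2)| := by
        rw [Real.abs_sinh]
        exact (Real.self_le_sinh_iff.mpr (abs_nonneg _)).trans_eq' rfl
      calc (t * x / 2) ^ 2 = |t * x / 2| ^ 2 := (sq_abs _).symm
        _ ≤ |Real.sinh (t * x / 2)| ^ 2 := by gcongr
        _ = _ := sq_abs _
    have := Real.cosh_eq (t * x)
    nlinarith
  have h2 : x ^ 2 / (2 * s) ≤ (Real.exp (t * x) + Real.exp (-(t * x)) - 2) / (2 * s * t ^ 2) := by
    calc x ^ 2 / (2 * s) = (t ^ 2 * x ^ 2) / (2 * s * t ^ 2) := by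
          field_simp
      _ ≤ _ := by gcongr
  linarith

lemma abs_inner_integrable {q : ℕ} (h : E q) :
    Integrable (fun v : E q => |⟪v, h⟫| * Real.exp (-‖v‖ ^ 2 / 2)) := by
  have hcont : Continuous fun v : E q => |⟪v, h⟫| * Real.exp (-‖v‖ ^ 2 / 2) := by
    exact ((continuous_id.inner continuous_const).abs).mul
      (Real.continuous_exp.comp ((continuous_norm.pow 2).neg.div_const 2))
  refine Integrable.mono' ((mgf_integrable h 1).add (mgf_integrable h (-1)))
    hcont.aestronglyMeasurable (Filter.Eventually.of_forall fun v => ?_)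
  have hx : |(⟪v, h⟫ : ℝ)| ≤ Real.exp ⟪v, h⟫ + Real.exp (-⟪v, h⟫) := by
    have h1 : |(⟪v, h⟫ : ℝ)| ≤ Real.exp |⟪v, h⟫| := by
      linarith [Real.add_one_le_exp |(⟪v, h⟫ : ℝ)|]
    refine h1.trans ?_
    rcases abs_cases (⟪v, h⟫ : ℝ) with ⟨he, _⟩ | ⟨he, _⟩ <;> rw [he] <;>
      [exact le_add_of_nonneg_right (Real.exp_pos _).le;
       exact le_add_of_nonneg_left (Real.exp_pos _).le]
  have hE : (0:ℝ) < Real.exp (-‖v‖ ^ 2 / 2) := Real.exp_pos _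
  rw [Real.norm_eq_abs, abs_of_nonneg (by positivity)]
  calc |(⟪v, h⟫ : ℝ)| * Real.exp (-‖v‖ ^ 2 / 2)
      ≤ (Real.exp ⟪v, h⟫ + Real.exp (-⟪v, h⟫)) * Real.exp (-‖v‖ ^ 2 / 2) := by
        exact mul_le_mul_of_nonneg_right hx hE.le
    _ = Real.exp (1 * ⟪v, h⟫ - ‖v‖ ^ 2 / 2) + Real.exp ((-1) * ⟪v, h⟫ - ‖v‖ ^ 2 / 2) := by
        rw [add_mul, ← Real.exp_add, ← Real.exp_add]; ring_nf

lemma key_moment {q : ℕ} (h : E q) :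
    ∫ v : E q, |⟪v, h⟫| * Real.exp (-‖v‖ ^ 2 / 2) ≤ ‖h‖ * (2 * π) ^ ((q : ℝ) / 2) := by
  rcases eq_or_ne h 0 with rfl | hne
  · simp only [inner_zero_right, abs_zero, zero_mul, integral_zero, norm_zero]
    positivity
  have ha : 0 < ‖h‖ := norm_pos_iff.mpr hne
  set a := ‖h‖ with hadef
  set K := (2 * π) ^ ((q : ℝ) / 2) with hK
  have hKpos : 0 < K := Real.rpow_pos_of_pos (by positivity) _
  refine le_of_forall_pos_le_add fun δ hδ => ?_
  set ε := min 1 (2 * δ / (a * K)) with hε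
  have hε0 : 0 < ε := lt_min one_pos (by positivity)
  have hε1 : ε ≤ 1 := min_le_left _ _
  have hεδ : a * K * ε / 2 ≤ δ := by
    have : ε ≤ 2 * δ / (a * K) := min_le_right _ _
    rw [div_le_iff₀ (by norm_num : (0:ℝ) < 2)] at *
    calc a * K * ε ≤ a * K * (2 * δ / (a * K)) := by
          exact mul_le_mul_of_nonneg_left (min_le_right _ _) (by positivity)
      _ = δ * 2 := by field_simp
  set u := ε / (1 + ε) with hu
  have hu0 : 0 < u := by positivity
  have hu1 : u < 1 := by
    rw [hu, div_lt_one (by positivity)]; linarith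
  set t := Real.sqrt (2 * u) / a with ht
  have ht0 : 0 < t := by positivity
  have htu : t ^ 2 * a ^ 2 = 2 * u := by
    rw [ht, div_pow, Real.sq_sqrt (by positivity : (0:ℝ) ≤ 2 * u)]
    field_simp
  have hmono : ∫ v : E q, |⟪v, h⟫| * Real.exp (-‖v‖ ^ 2 / 2)
      ≤ ∫ v : E q, (1 / (2 * a * t ^ 2)) *
          (Real.exp (t * ⟪v, h⟫ - ‖v‖ ^ 2 / 2) + Real.exp ((-t) * ⟪v, h⟫ - ‖v‖ ^ 2 / 2)
            - 2 * Real.exp (-‖v‖ ^ 2 / 2))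
          + (a / 2) * Real.exp (-‖v‖ ^ 2 / 2) := by
    refine integral_mono (abs_inner_integrable h) ?_ fun v => ?_
    · exact ((((mgf_integrable h t).add (mgf_integrable h (-t))).sub
        ((gauss_integrable q).const_mul 2)).const_mul _).add
        ((gauss_integrable q).const_mul _)
    · have hb := scalar_bound ha ht0 (⟪v, h⟫ : ℝ)
      have hE : (0:ℝ) < Real.exp (-‖v‖ ^ 2 / 2) := Real.exp_pos _
      have := mul_le_mul_of_nonneg_right hb hE.le
      calc |(⟪v, h⟫ : ℝ)| * Real.exp (-‖v‖ ^ 2 / 2)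
          ≤ ((Real.exp (t * ⟪v, h⟫) + Real.exp (-(t * ⟪v, h⟫)) - 2) / (2 * a * t ^ 2) + a / 2)
              * Real.exp (-‖v‖ ^ 2 / 2) := this
        _ = _ := by
            rw [add_mul, div_mul_eq_mul_div, sub_mul, add_mul, ← Real.exp_add, ← Real.exp_add,
              show t * ⟪v, h⟫ + -‖v‖ ^ 2 / 2 = t * ⟪v, h⟫ - ‖v‖ ^ 2 / 2 from by ring,
              show -(t * ⟪v, h⟫) + -‖v‖ ^ 2 / 2 = (-t) * ⟪v, h⟫ - ‖v‖ ^ 2 / 2 from by ring]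
            ring
  have hRHS : ∫ v : E q, (1 / (2 * a * t ^ 2)) *
          (Real.exp (t * ⟪v, h⟫ - ‖v‖ ^ 2 / 2) + Real.exp ((-t) * ⟪v, h⟫ - ‖v‖ ^ 2 / 2)
            - 2 * Real.exp (-‖v‖ ^ 2 / 2))
          + (a / 2) * Real.exp (-‖v‖ ^ 2 / 2)
      = (1 / (2 * a * t ^ 2)) * (2 * Real.exp u * K - 2 * K) + (a / 2) * K := by
    have i1 : Integrable (fun v : E q => Real.exp (t * ⟪v, h⟫ - ‖v‖ ^ 2 / 2)) :=
      mgf_integrable h t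
    have i2 : Integrable (fun v : E q => Real.exp ((-t) * ⟪v, h⟫ - ‖v‖ ^ 2 / 2)) :=
      mgf_integrable h (-t)
    have i3 : Integrable (fun v : E q => 2 * Real.exp (-‖v‖ ^ 2 / 2)) :=
      (gauss_integrable q).const_mul 2
    have i12 : Integrable (fun v : E q => Real.exp (t * ⟪v, h⟫ - ‖v‖ ^ 2 / 2)
        + Real.exp ((-t) * ⟪v, h⟫ - ‖v‖ ^ 2 / 2)) := i1.add i2
    have i123 : Integrable (fun v : E q => (Real.exp (t * ⟪v, h⟫ - ‖v‖ ^ 2 / 2)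
        + Real.exp ((-t) * ⟪v, h⟫ - ‖v‖ ^ 2 / 2)) - 2 * Real.exp (-‖v‖ ^ 2 / 2)) := i12.sub i3
    rw [integral_add (i123.const_mul _) ((gauss_integrable q).const_mul _), integral_const_mul,
      integral_const_mul, integral_sub i12 i3, integral_add i1 i2, integral_const_mul,
      mgf_integral, mgf_integral, gauss_integral, ← hK, ← hadef]
    have : t ^ 2 * a ^ 2 / 2 = u := by rw [htu]; ring
    rw [show (-t) ^ 2 = t ^ 2 by ring, this]
    ring
  rw [hRHS] at hmono
  refine hmono.trans ?_
  have hexpu : Real.exp u - 1 ≤ ε := by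
    have hb := Real.exp_bound_div_one_sub_of_interval hu0.le hu1
    have h1u : 1 - u = 1 / (1 + ε) := by rw [hu]; field_simp; ring
    rw [h1u] at hb
    have : Real.exp u ≤ 1 + ε := by
      rwa [one_div_one_div] at hb
    linarith
  have hat2 : a * t ^ 2 = 2 * u / a := by
    have : t ^ 2 = 2 * u / a ^ 2 := by
      field_simp at htu ⊢; linarith [htu]
    rw [this]; field_simp
  have step : (1 / (2 * a * t ^ 2)) * (2 * Real.exp u * K - 2 * K) ≤ a * K * (1 + ε) / 2 := by
    have expand : (1 / (2 * a * t ^ 2)) * (2 * Real.exp u * K - 2 * K)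
        = (Real.exp u - 1) * K / (a * t ^ 2) := by
      field_simp
    rw [expand, hat2]
    calc (Real.exp u - 1) * K / (2 * u / a) ≤ ε * K / (2 * u / a) := by
          refine (div_le_div_iff_of_pos_right (by positivity)).mpr ?_
          exact mul_le_mul_of_nonneg_right hexpu hKpos.le
      _ = a * K * (1 + ε) / 2 := by
          rw [hu]
          field_simp
  calc (1 / (2 * a * t ^ 2)) * (2 * Real.exp u * K - 2 * K) + (a / 2) * K
      ≤ a * K * (1 + ε) / 2 + (a / 2) * K := by linarith
    _ = a * K + a * K * ε / 2 := by ring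
    _ ≤ a * K + δ := by linarith

lemma ftc_bound {q : ℕ} (c : ℝ) (hc : 0 < c) (y yt υ : E q) :
    |c * Real.exp (-‖υ - y‖ ^ 2 / 2) - c * Real.exp (-‖υ - yt‖ ^ 2 / 2)|
      ≤ ∫ t in Set.Ioc (0:ℝ) 1,
          |⟪υ - y + t • (y - yt), y - yt⟫|
            * (c * Real.exp (-‖υ - y + t • (y - yt)‖ ^ 2 / 2)) := by
  set h : E q := y - yt with hh
  set u : ℝ → E q := fun t => υ - y + t • h with hu
  set g : ℝ → ℝ := fun t => c * Real.exp (-‖u t‖ ^ 2 / 2) with hg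
  set g' : ℝ → ℝ := fun t => -(⟪u t, h⟫) * (c * Real.exp (-‖u t‖ ^ 2 / 2)) with hg'
  have hucont : Continuous u := by
    exact continuous_const.add (continuous_id.smul continuous_const)
  have hg'cont : Continuous g' := by
    exact ((hucont.inner continuous_const).neg).mul
      (continuous_const.mul (Real.continuous_exp.comp
        ((hucont.norm.pow 2).neg.div_const 2)))
  have hderiv : ∀ t ∈ Set.uIcc (0:ℝ) 1, HasDerivAt g (g' t) t := by
    intro t _
    have hud : HasDerivAt u h t := by
      have := ((hasDerivAt_id t).smul_const h).const_add (υ - y)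
      simpa [hu] using this
    have hinner : HasDerivAt (fun s => (⟪u s, u s⟫ : ℝ)) (⟪u t, h⟫ + ⟪h, u t⟫) t :=
      hud.inner (𝕜 := ℝ) hud
    have hexp : HasDerivAt (fun s => c * Real.exp (-(⟪u s, u s⟫ : ℝ) / 2))
        (c * (Real.exp (-(⟪u t, u t⟫ : ℝ) / 2) * (-(⟪u t, h⟫ + ⟪h, u t⟫) / 2))) t := by
      exact ((hinner.neg.div_const 2).exp).const_mul c
    have hfun : (fun s => c * Real.exp (-(⟪u s, u s⟫ : ℝ) / 2)) = g := by
      funext s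
      rw [hg, real_inner_self_eq_norm_sq]
    rw [hfun] at hexp
    convert hexp using 1
    rw [hg', real_inner_self_eq_norm_sq]
    ring_nf
    rw [real_inner_comm (u t) h]
    ring
  have hInt : IntervalIntegrable g' MeasureTheory.volume 0 1 :=
    hg'cont.intervalIntegrable 0 1
  have hftc : ∫ t in (0:ℝ)..1, g' t = g 1 - g 0 :=
    intervalIntegral.integral_eq_sub_of_hasDerivAt hderiv hInt
  have h0 : g 0 = c * Real.exp (-‖υ - y‖ ^ 2 / 2) := by
    simp [hg, hu]
  have h1 : g 1 = c * Real.exp (-‖υ - yt‖ ^ 2 / 2) := by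
    simp only [hg, hu, one_smul, hh]
    congr 3
    abel
  calc |c * Real.exp (-‖υ - y‖ ^ 2 / 2) - c * Real.exp (-‖υ - yt‖ ^ 2 / 2)|
      = |∫ t in (0:ℝ)..1, g' t| := by rw [hftc, h0, h1, abs_sub_comm]
    _ ≤ ∫ t in (0:ℝ)..1, |g' t| := intervalIntegral.abs_integral_le_integral_abs zero_le_one
    _ = ∫ t in Set.Ioc (0:ℝ) 1, |g' t| := intervalIntegral.integral_of_le zero_le_one
    _ = _ := by
        refine setIntegral_congr_fun measurableSet_Ioc fun t _ => ?_
        rw [hg', abs_mul, abs_neg, abs_of_pos (mul_pos hc (Real.exp_pos _))]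


set_option maxHeartbeats 2000000 in
lemma delta_bound {q : ℕ} (c : ℝ) (hc : 0 < c)
    (hcK : c * (2 * π) ^ ((q : ℝ) / 2) = 1) (y yt : EuclideanSpace ℝ (Fin q)) :
    (∫ υ : EuclideanSpace ℝ (Fin q), |c * Real.exp (-‖υ - y‖ ^ 2 / 2)
      - c * Real.exp (-‖υ - yt‖ ^ 2 / 2)|) ≤ ‖y - yt‖ := by
  obtain ⟨h, hh⟩ : ∃ h : EuclideanSpace ℝ (Fin q), h = y - yt := ⟨_, rfl⟩
  rw [← hh]
  have gint : ∀ w : EuclideanSpace ℝ (Fin q), Integrable (fun υ : EuclideanSpace ℝ (Fin q) => c * Real.exp (-‖υ - w‖ ^ 2 / 2)) :=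
    fun w => ((gauss_integrable q).comp_sub_right w).const_mul c
  obtain ⟨G, hG⟩ : ∃ G : EuclideanSpace ℝ (Fin q) → ℝ,
      G = fun v => |⟪v, h⟫| * (c * Real.exp (-‖v‖ ^ 2 / 2)) := ⟨_, rfl⟩
  have hGint : Integrable G := by
    exact ((abs_inner_integrable h).const_mul c).congr
      (Filter.Eventually.of_forall fun v => by rw [hG]; ring)
  have hGC : ∫ v, G v ≤ ‖h‖ := by
    calc ∫ v, G v = ∫ v : EuclideanSpace ℝ (Fin q), c * (|⟪v, h⟫| * Real.exp (-‖v‖ ^ 2 / 2)) := by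
          congr 1; funext v; rw [hG]; ring
      _ = c * ∫ v : EuclideanSpace ℝ (Fin q), |⟪v, h⟫| * Real.exp (-‖v‖ ^ 2 / 2) := integral_const_mul _ _
      _ ≤ c * (‖h‖ * (2 * π) ^ ((q : ℝ) / 2)) :=
          mul_le_mul_of_nonneg_left (key_moment h) hc.le
      _ = ‖h‖ * (c * (2 * π) ^ ((q : ℝ) / 2)) := by ring
      _ = ‖h‖ := by rw [hcK, mul_one]
  have hwcont : Continuous (fun z : (EuclideanSpace ℝ (Fin q)) × ℝ => z.1 - y + z.2 • h) :=
    (continuous_fst.sub continuous_const).add (continuous_snd.smul continuous_const)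
  have hrcont : Continuous (fun z : (EuclideanSpace ℝ (Fin q)) × ℝ =>
      |⟪z.1 - y + z.2 • h, h⟫| * (c * Real.exp (-‖z.1 - y + z.2 • h‖ ^ 2 / 2))) :=
    ((hwcont.inner continuous_const).abs).mul
      (continuous_const.mul (Real.continuous_exp.comp
        ((hwcont.norm.pow 2).neg.div_const 2)))
  have hptwise : ∀ υ : EuclideanSpace ℝ (Fin q), ENNReal.ofReal (|c * Real.exp (-‖υ - y‖ ^ 2 / 2)
      - c * Real.exp (-‖υ - yt‖ ^ 2 / 2)|)
      ≤ ∫⁻ t in Set.Ioc (0:ℝ) 1, ENNReal.ofReal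
          (|⟪υ - y + t • h, h⟫| * (c * Real.exp (-‖υ - y + t • h‖ ^ 2 / 2))) := by
    intro υ
    have wt : Continuous (fun t : ℝ => υ - y + t • h) :=
      continuous_const.add (continuous_id.smul continuous_const)
    have hcont_t : Continuous (fun t : ℝ =>
        |⟪υ - y + t • h, h⟫| * (c * Real.exp (-‖υ - y + t • h‖ ^ 2 / 2))) :=
      ((wt.inner continuous_const).abs).mul
        (continuous_const.mul (Real.continuous_exp.comp
          ((wt.norm.pow 2).neg.div_const 2)))
    have hio : IntegrableOn (fun t : ℝ =>
        |⟪υ - y + t • h, h⟫| * (c * Real.exp (-‖υ - y + t • h‖ ^ 2 / 2)))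
        (Set.Ioc (0:ℝ) 1) := hcont_t.integrableOn_Ioc
    have hftc := hh ▸ ftc_bound c hc y yt υ
    calc ENNReal.ofReal (|c * Real.exp (-‖υ - y‖ ^ 2 / 2) - c * Real.exp (-‖υ - yt‖ ^ 2 / 2)|)
        ≤ ENNReal.ofReal (∫ t in Set.Ioc (0:ℝ) 1,
            |⟪υ - y + t • h, h⟫| * (c * Real.exp (-‖υ - y + t • h‖ ^ 2 / 2))) :=
          ENNReal.ofReal_le_ofReal hftc
      _ = _ := ofReal_integral_eq_lintegral_ofReal hio
          (Filter.Eventually.of_forall fun t => by positivity)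
  have hswap : ∫⁻ υ : EuclideanSpace ℝ (Fin q), ∫⁻ t in Set.Ioc (0:ℝ) 1, ENNReal.ofReal
          (|⟪υ - y + t • h, h⟫| * (c * Real.exp (-‖υ - y + t • h‖ ^ 2 / 2)))
      = ∫⁻ t in Set.Ioc (0:ℝ) 1, ∫⁻ υ : EuclideanSpace ℝ (Fin q), ENNReal.ofReal
          (|⟪υ - y + t • h, h⟫| * (c * Real.exp (-‖υ - y + t • h‖ ^ 2 / 2))) := by
    exact lintegral_lintegral_swap (hrcont.measurable.ennreal_ofReal.aemeasurable)
  have hinner : ∀ t : ℝ, ∫⁻ υ : EuclideanSpace ℝ (Fin q), ENNReal.ofReal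
          (|⟪υ - y + t • h, h⟫| * (c * Real.exp (-‖υ - y + t • h‖ ^ 2 / 2)))
      = ENNReal.ofReal (∫ v, G v) := by
    intro t
    have harg : ∀ υ : EuclideanSpace ℝ (Fin q), υ - y + t • h = υ + (t • h - y) := fun υ => by abel
    have hint : Integrable (fun υ : EuclideanSpace ℝ (Fin q) =>
        |⟪υ - y + t • h, h⟫| * (c * Real.exp (-‖υ - y + t • h‖ ^ 2 / 2))) := by
      have h2 := hGint.comp_add_right (t • h - y)
      refine h2.congr (Filter.Eventually.of_forall fun υ => ?_)
      rw [hG]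
      simp only [harg υ]
    rw [← ofReal_integral_eq_lintegral_ofReal hint
      (Filter.Eventually.of_forall fun υ => by positivity)]
    congr 1
    simp_rw [harg]
    rw [hG]
    exact integral_add_right_eq_self
      (fun v : EuclideanSpace ℝ (Fin q) => |⟪v, h⟫| * (c * Real.exp (-‖v‖ ^ 2 / 2)))
      (t • h - y)
  have IΔ : Integrable (fun υ : EuclideanSpace ℝ (Fin q) =>
      c * Real.exp (-‖υ - y‖ ^ 2 / 2) - c * Real.exp (-‖υ - yt‖ ^ 2 / 2)) :=
    (gint y).sub (gint yt)
  rw [integral_eq_lintegral_of_nonneg_ae (Filter.Eventually.of_forall fun υ => abs_nonneg _)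
    IΔ.abs.aestronglyMeasurable]
  refine ENNReal.toReal_le_of_le_ofReal (norm_nonneg h) ?_
  calc ∫⁻ υ : EuclideanSpace ℝ (Fin q), ENNReal.ofReal (|c * Real.exp (-‖υ - y‖ ^ 2 / 2)
        - c * Real.exp (-‖υ - yt‖ ^ 2 / 2)|)
      ≤ ∫⁻ υ : EuclideanSpace ℝ (Fin q), ∫⁻ t in Set.Ioc (0:ℝ) 1, ENNReal.ofReal
          (|⟪υ - y + t • h, h⟫| * (c * Real.exp (-‖υ - y + t • h‖ ^ 2 / 2))) :=
        lintegral_mono hptwise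
    _ = ∫⁻ t in Set.Ioc (0:ℝ) 1, ∫⁻ υ : EuclideanSpace ℝ (Fin q), ENNReal.ofReal
          (|⟪υ - y + t • h, h⟫| * (c * Real.exp (-‖υ - y + t • h‖ ^ 2 / 2))) := hswap
    _ = ∫⁻ _t in Set.Ioc (0:ℝ) 1, ENNReal.ofReal (∫ v, G v) := by
        exact setLIntegral_congr_fun measurableSet_Ioc
          (fun t _ => hinner t)
    _ = ENNReal.ofReal (∫ v, G v) := by
        rw [setLIntegral_const, Real.volume_Ioc]
        norm_num
    _ ≤ ENNReal.ofReal ‖h‖ := ENNReal.ofReal_le_ofReal hGC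

set_option maxHeartbeats 1000000 in
/-- Bagging (Gaussian convolution) of a bounded measurable estimator yields a
Lipschitz function with constant `abar * √p`. -/
theorem bagged_estimator_lipschitz
    (p q : ℕ) (hp : 0 < p) (hq : 0 < q) (abar : ℝ) (habar : 0 ≤ abar)
    (γ : EuclideanSpace ℝ (Fin q) → EuclideanSpace ℝ (Fin p))
    (hγmeas : Measurable γ) (hγbd : ∀ υ, ‖γ υ‖ ≤ abar)
    (γB : EuclideanSpace ℝ (Fin q) → EuclideanSpace ℝ (Fin p))
    (hγB : ∀ y, γB y =
      ∫ υ, ((2 * Real.pi) ^ (-(q : ℝ) / 2) * Real.exp (-‖υ - y‖ ^ 2 / 2)) • γ υ) :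
    ∀ y ytilde : EuclideanSpace ℝ (Fin q),
      ‖γB y - γB ytilde‖ ≤ abar * Real.sqrt p * ‖y - ytilde‖ := by
  intro y yt
  obtain ⟨c, hcdef⟩ : ∃ c : ℝ, c = (2 * Real.pi) ^ (-(q : ℝ) / 2) := ⟨_, rfl⟩
  simp_rw [← hcdef] at hγB
  have hc : 0 < c := hcdef ▸ Real.rpow_pos_of_pos (by positivity) _
  have hcK : c * (2 * π) ^ ((q : ℝ) / 2) = 1 := by
    rw [hcdef, ← Real.rpow_add (by positivity),
      show -(q:ℝ)/2 + (q:ℝ)/2 = 0 by ring, Real.rpow_zero]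
  have gint : ∀ w : EuclideanSpace ℝ (Fin q),
      Integrable (fun υ : EuclideanSpace ℝ (Fin q) => c * Real.exp (-‖υ - w‖ ^ 2 / 2)) :=
    fun w => ((gauss_integrable q).comp_sub_right w).const_mul c
  have hγae : AEStronglyMeasurable γ volume := hγmeas.aestronglyMeasurable
  have hφcont : ∀ w : EuclideanSpace ℝ (Fin q),
      Continuous (fun υ : EuclideanSpace ℝ (Fin q) => c * Real.exp (-‖υ - w‖ ^ 2 / 2)) :=
    fun w => continuous_const.mul (Real.continuous_exp.comp
      ((((continuous_id.sub continuous_const)).norm.pow 2).neg.div_const 2))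
  have I : ∀ w : EuclideanSpace ℝ (Fin q),
      Integrable (fun υ => (c * Real.exp (-‖υ - w‖ ^ 2 / 2)) • γ υ) := by
    intro w
    refine Integrable.mono' (((gint w)).mul_const abar)
      (((hφcont w).aestronglyMeasurable).smul hγae) (Filter.Eventually.of_forall fun υ => ?_)
    rw [norm_smul, Real.norm_eq_abs, abs_of_pos (mul_pos hc (Real.exp_pos _))]
    exact mul_le_mul_of_nonneg_left (hγbd υ) (mul_pos hc (Real.exp_pos _)).le
  have hdiff : γB y - γB yt = ∫ υ, ((c * Real.exp (-‖υ - y‖ ^ 2 / 2))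
      - (c * Real.exp (-‖υ - yt‖ ^ 2 / 2))) • γ υ := by
    rw [hγB y, hγB yt, ← integral_sub (I y) (I yt)]
    congr 1
    funext υ
    rw [sub_smul]
  have IΔ : Integrable (fun υ : EuclideanSpace ℝ (Fin q) => c * Real.exp (-‖υ - y‖ ^ 2 / 2)
      - c * Real.exp (-‖υ - yt‖ ^ 2 / 2)) := (gint y).sub (gint yt)
  have Isub : Integrable (fun υ : EuclideanSpace ℝ (Fin q) =>
      ((c * Real.exp (-‖υ - y‖ ^ 2 / 2))
      - (c * Real.exp (-‖υ - yt‖ ^ 2 / 2))) • γ υ) := by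
    simp_rw [sub_smul]
    exact (I y).sub (I yt)
  have hnorm : ‖γB y - γB yt‖ ≤ (∫ υ : EuclideanSpace ℝ (Fin q),
      |c * Real.exp (-‖υ - y‖ ^ 2 / 2) - c * Real.exp (-‖υ - yt‖ ^ 2 / 2)|) * abar := by
    rw [hdiff, ← integral_mul_const]
    refine (norm_integral_le_integral_norm _).trans (integral_mono Isub.norm
      (IΔ.abs.mul_const abar) fun υ => ?_)
    rw [norm_smul, Real.norm_eq_abs]
    exact mul_le_mul_of_nonneg_left (hγbd υ) (abs_nonneg _)
  have key2 := delta_bound c hc hcK y yt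
  have hsp : 1 ≤ Real.sqrt p := Real.one_le_sqrt.mpr (by exact_mod_cast hp)
  calc ‖γB y - γB yt‖ ≤ (∫ υ : EuclideanSpace ℝ (Fin q), |c * Real.exp (-‖υ - y‖ ^ 2 / 2)
        - c * Real.exp (-‖υ - yt‖ ^ 2 / 2)|) * abar := hnorm
    _ ≤ ‖y - yt‖ * abar := mul_le_mul_of_nonneg_right key2 habar
    _ = abar * ‖y - yt‖ := mul_comm _ _
    _ ≤ abar * (Real.sqrt p * ‖y - yt‖) :=
        mul_le_mul_of_nonneg_left (le_mul_of_one_le_left (norm_nonneg _) hsp) habar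
    _ = abar * Real.sqrt p * ‖y - yt‖ := (mul_assoc _ _ _).symm
end

section
/- Let (Θ, 𝒜, π) be a probability space, let p be a positive natural number and r̄ ≥ 0, and let r : Θ → EuclideanSpace ℝ (Fin p) be measurable with ‖r(θ)‖ ≤ r̄ for all θ. For a bounded measurable function Q : Θ → ℝ define the quasi-Bayes posterior mean δ(Q) = (∫ exp(−Q(θ)/2) · r(θ) dπ(θ)) / (∫ exp(−Q(θ)/2) dπ(θ)). Then for any two bounded measurable functions Q, Q' : Θ → ℝ, ‖δ(Q) − δ(Q')‖ ≤ (1/2) · r̄ · √p · sup_{θ∈Θ} |Q(θ) − Q'(θ)|. -/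
open MeasureTheory

lemma qb_aux_integrable {Θ : Type*} [MeasurableSpace Θ] {π : Measure Θ} [IsFiniteMeasure π]
    {E : Type*} [NormedAddCommGroup E] {h : Θ → E} (hm : AEStronglyMeasurable h π)
    {c : ℝ} (hb : ∀ θ, ‖h θ‖ ≤ c) : Integrable h π :=
  (integrable_const c).mono' hm (Filter.Eventually.of_forall hb)

/-- Weighted mean absolute deviation bound via Cauchy–Schwarz. -/
lemma qb_aux_mad {Θ : Type*} [MeasurableSpace Θ] (π : Measure Θ) [IsProbabilityMeasure π]
    (f w : Θ → ℝ) (M L : ℝ) (hM : 0 ≤ M) (hfm : Measurable f) (hwm : Measurable w)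
    (hw0 : ∀ θ, 0 < w θ) (hwL : ∀ θ, w θ ≤ L) (hfM : ∀ θ, |f θ| ≤ M)
    (hZ : 0 < ∫ θ, w θ ∂π) :
    ∫ θ, |f θ - (∫ θ, f θ * w θ ∂π) / (∫ θ, w θ ∂π)| * w θ ∂π
      ≤ M * ∫ θ, w θ ∂π := by
  set Z : ℝ := ∫ θ, w θ ∂π with hZdef
  set c : ℝ := (∫ θ, f θ * w θ ∂π) / Z with hcdef
  set X : ℝ := ∫ θ, |f θ - c| * w θ ∂π with hXdef
  set A : ℝ := ∫ θ, (f θ - c) ^ 2 * w θ ∂π with hAdef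
  -- integrability of all pieces
  have hwabs : ∀ θ, ‖w θ‖ ≤ L := fun θ => by
    rw [Real.norm_eq_abs, abs_of_pos (hw0 θ)]; exact hwL θ
  have Iw : Integrable w π := qb_aux_integrable hwm.aestronglyMeasurable hwabs
  have Ifw : Integrable (fun θ => f θ * w θ) π := by
    refine qb_aux_integrable ((hfm.mul hwm).aestronglyMeasurable) (c := M * L) (fun θ => ?_)
    rw [Real.norm_eq_abs, abs_mul, abs_of_pos (hw0 θ)]
    exact mul_le_mul (hfM θ) (hwL θ) (le_of_lt (hw0 θ)) hM
  have hf2M : ∀ θ, f θ ^ 2 ≤ M ^ 2 := fun θ => by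
    have h1 := (abs_le.mp (hfM θ)).1
    have h2 := (abs_le.mp (hfM θ)).2
    nlinarith
  have If2w : Integrable (fun θ => f θ ^ 2 * w θ) π := by
    refine qb_aux_integrable (((hfm.pow_const 2).mul hwm).aestronglyMeasurable)
      (c := M ^ 2 * L) (fun θ => ?_)
    rw [Real.norm_eq_abs, abs_mul, abs_of_pos (hw0 θ), abs_pow, ← sq_abs, abs_abs, sq_abs]
    exact mul_le_mul (hf2M θ) (hwL θ) (le_of_lt (hw0 θ)) (by positivity)
  have Iaw : Integrable (fun θ => |f θ - c| * w θ) π := by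
    refine qb_aux_integrable (((hfm.sub measurable_const).abs.mul hwm).aestronglyMeasurable)
      (c := (M + |c|) * L) (fun θ => ?_)
    rw [Real.norm_eq_abs, abs_mul, abs_abs, abs_of_pos (hw0 θ)]
    refine mul_le_mul ?_ (hwL θ) (le_of_lt (hw0 θ)) (by positivity)
    exact (abs_sub (f θ) c).trans (add_le_add (hfM θ) le_rfl)
  have hfwc : ∫ θ, f θ * w θ ∂π = c * Z := by
    rw [hcdef]; field_simp
  -- A = ∫ f² w - c² Z ≤ M² Z
  have hA_eq : A = (∫ θ, f θ ^ 2 * w θ ∂π) - c ^ 2 * Z := by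
    have e1 : ∀ θ, (f θ - c) ^ 2 * w θ
        = (f θ ^ 2 * w θ - (2 * c) * (f θ * w θ)) + c ^ 2 * w θ := fun θ => by ring
    have Isub : Integrable (fun θ => f θ ^ 2 * w θ - (2 * c) * (f θ * w θ)) π :=
      If2w.sub (Ifw.const_mul _)
    rw [hAdef]
    simp_rw [e1]
    rw [integral_add Isub (Iw.const_mul _), integral_sub If2w (Ifw.const_mul _),
      integral_const_mul, integral_const_mul, hfwc]
    ring
  have hAle : A ≤ M ^ 2 * Z := by
    have h1 : (∫ θ, f θ ^ 2 * w θ ∂π) ≤ ∫ θ, M ^ 2 * w θ ∂π :=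
      integral_mono If2w (Iw.const_mul _) (fun θ =>
        mul_le_mul_of_nonneg_right (hf2M θ) (le_of_lt (hw0 θ)))
    rw [integral_const_mul] at h1
    rw [hA_eq]
    nlinarith [sq_nonneg c, hZ]
  have hX0 : 0 ≤ X := by
    rw [hXdef]
    exact integral_nonneg (fun θ => mul_nonneg (abs_nonneg _) (le_of_lt (hw0 θ)))
  -- Cauchy–Schwarz: 0 ≤ ∫ (Z|f-c| - X)² w = Z²A - 2ZX·X + X²Z
  have key : 0 ≤ Z ^ 2 * A - 2 * Z * X * X + X ^ 2 * Z := by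
    have h0 : 0 ≤ ∫ θ, (Z * |f θ - c| - X) ^ 2 * w θ ∂π :=
      integral_nonneg (fun θ => mul_nonneg (sq_nonneg _) (le_of_lt (hw0 θ)))
    have e2 : ∀ θ, (Z * |f θ - c| - X) ^ 2 * w θ
        = (Z ^ 2 * ((f θ - c) ^ 2 * w θ) - (2 * Z * X) * (|f θ - c| * w θ))
            + X ^ 2 * w θ := fun θ => by
      rw [sub_sq, mul_pow, sq_abs]; ring
    have Icw : Integrable (fun θ => (f θ - c) ^ 2 * w θ) π := by
      have e3 : ∀ θ, (f θ - c) ^ 2 * w θ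
          = (f θ ^ 2 * w θ - (2 * c) * (f θ * w θ)) + c ^ 2 * w θ := fun θ => by ring
      have : Integrable (fun θ => (f θ ^ 2 * w θ - (2 * c) * (f θ * w θ)) + c ^ 2 * w θ) π :=
        (If2w.sub (Ifw.const_mul _)).add (Iw.const_mul _)
      exact this.congr (Filter.Eventually.of_forall (fun θ => (e3 θ).symm))
    have Isub : Integrable (fun θ =>
        Z ^ 2 * ((f θ - c) ^ 2 * w θ) - (2 * Z * X) * (|f θ - c| * w θ)) π :=
      (Icw.const_mul _).sub (Iaw.const_mul _)
    simp_rw [e2] at h0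
    rw [integral_add Isub (Iw.const_mul _), integral_sub (Icw.const_mul _) (Iaw.const_mul _),
      integral_const_mul, integral_const_mul, integral_const_mul, ← hAdef, ← hXdef, ← hZdef] at h0
    linarith
  have h4 : Z * X ^ 2 ≤ Z ^ 2 * A := by nlinarith [key]
  have h5 : Z * X ^ 2 ≤ Z * (M ^ 2 * Z ^ 2) := by nlinarith [mul_le_mul_of_nonneg_left hAle (sq_nonneg Z), hZ]
  have h6 : X ^ 2 ≤ M ^ 2 * Z ^ 2 := le_of_mul_le_mul_left h5 hZ
  calc X = Real.sqrt (X ^ 2) := (Real.sqrt_sq hX0).symm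
  _ ≤ Real.sqrt ((M * Z) ^ 2) := Real.sqrt_le_sqrt (by nlinarith [h6])
  _ = M * Z := Real.sqrt_sq (mul_nonneg hM hZ.le)

section Core
variable {Θ : Type*} [MeasurableSpace Θ] (π : Measure Θ) [IsProbabilityMeasure π]
  {E : Type*} [NormedAddCommGroup E] [NormedSpace ℝ E] [CompleteSpace E]

lemma qb_core (rbar : ℝ) (hrbar : 0 ≤ rbar) (r : Θ → E)
    (hrm : AEStronglyMeasurable r π)
    (hrbd : ∀ θ, ‖r θ‖ ≤ rbar)
    (Q Q' : Θ → ℝ) (hQm : Measurable Q) (hQ'm : Measurable Q')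
    (MQ MQ' : ℝ) (hMQ : ∀ θ, |Q θ| ≤ MQ) (hMQ' : ∀ θ, |Q' θ| ≤ MQ')
    (S : ℝ) (hS0 : 0 ≤ S) (hDb : ∀ θ, |Q θ - Q' θ| ≤ S) :
    ‖((∫ θ, Real.exp (-Q θ / 2) ∂π)⁻¹ • ∫ θ, Real.exp (-Q θ / 2) • r θ ∂π)
      - ((∫ θ, Real.exp (-Q' θ / 2) ∂π)⁻¹ • ∫ θ, Real.exp (-Q' θ / 2) • r θ ∂π)‖
      ≤ 1 / 2 * rbar * S := by
  classical
  set D : Θ → ℝ := fun θ => Q θ - Q' θ with hDdef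
  set f : Θ → ℝ := fun θ => -D θ / 2 with hfdef
  have hDm : Measurable D := hQm.sub hQ'm
  have hfm : Measurable f := hDm.neg.div_const 2
  have hfb : ∀ θ, |f θ| ≤ S / 2 := fun θ => by
    rw [hfdef]
    simp only [abs_div, abs_neg]
    have h1 : |D θ| ≤ S := hDb θ
    rw [abs_of_pos (by norm_num : (0:ℝ) < 2)]
    linarith
  have hDK : ∀ θ, |D θ| ≤ MQ + MQ' := fun θ =>
    (abs_sub (Q θ) (Q' θ)).trans (add_le_add (hMQ θ) (hMQ' θ))
  set G : ℝ → Θ → ℝ := fun t θ => Real.exp (-(Q' θ + t * D θ) / 2) with hGdef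
  set L : ℝ := Real.exp ((MQ' + 3 * (MQ + MQ')) / 2) with hLdef
  have hL0 : 0 < L := Real.exp_pos _
  have hGm : ∀ t, Measurable (G t) := fun t =>
    ((hQ'm.add (hDm.const_mul t)).neg.div_const 2).exp
  have hGpos : ∀ t θ, 0 < G t θ := fun t θ => Real.exp_pos _
  have habs : ∀ t : ℝ, |t| ≤ 3 → ∀ θ, |Q' θ + t * D θ| ≤ MQ' + 3 * (MQ + MQ') := by
    intro t ht θ
    calc |Q' θ + t * D θ| ≤ |Q' θ| + |t| * |D θ| := by
          rw [← abs_mul]; exact abs_add_le _ _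
    _ ≤ MQ' + 3 * (MQ + MQ') :=
        add_le_add (hMQ' θ) (mul_le_mul ht (hDK θ) (abs_nonneg _) (by norm_num))
  have hGub : ∀ t : ℝ, |t| ≤ 3 → ∀ θ, G t θ ≤ L := by
    intro t ht θ
    rw [hGdef, hLdef]
    apply Real.exp_le_exp.mpr
    have h1 := (abs_le.mp (habs t ht θ)).1
    set X := Q' θ + t * D θ with hX
    linarith
  have hGlb : ∀ t : ℝ, |t| ≤ 3 → ∀ θ,
      Real.exp (-(MQ' + 3 * (MQ + MQ')) / 2) ≤ G t θ := by
    intro t ht θ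
    rw [hGdef]
    apply Real.exp_le_exp.mpr
    have h1 := (abs_le.mp (habs t ht θ)).2
    set X := Q' θ + t * D θ with hX
    linarith
  have hGd : ∀ (x : ℝ) (θ : Θ), HasDerivAt (fun s => G s θ) (f θ * G x θ) x := by
    intro x θ
    have h0 : HasDerivAt (fun s : ℝ => Q' θ + s * D θ) (D θ) x :=
      (hasDerivAt_mul_const (D θ)).const_add (Q' θ)
    have h1 : HasDerivAt (fun s : ℝ => -(Q' θ + s * D θ) / 2) (f θ) x := by
      simpa [hfdef] using h0.neg.div_const 2
    have h2 := h1.exp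
    simpa [hGdef, mul_comm] using h2
  -- integrability
  have hGn : ∀ t : ℝ, |t| ≤ 3 → ∀ θ, ‖G t θ‖ ≤ L := fun t ht θ => by
    rw [Real.norm_eq_abs, abs_of_pos (hGpos t θ)]; exact hGub t ht θ
  have IG : ∀ t : ℝ, |t| ≤ 3 → Integrable (G t) π := fun t ht =>
    qb_aux_integrable (hGm t).aestronglyMeasurable (hGn t ht)
  have IGr : ∀ t : ℝ, |t| ≤ 3 → Integrable (fun θ => G t θ • r θ) π := by
    intro t ht
    refine qb_aux_integrable ((hGm t).aestronglyMeasurable.smul hrm) (c := L * rbar)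
      (fun θ => ?_)
    rw [norm_smul, Real.norm_eq_abs, abs_of_pos (hGpos t θ)]
    exact mul_le_mul (hGub t ht θ) (hrbd θ) (norm_nonneg _) hL0.le
  have IfG : ∀ t : ℝ, |t| ≤ 3 → Integrable (fun θ => f θ * G t θ) π := by
    intro t ht
    refine qb_aux_integrable ((hfm.mul (hGm t)).aestronglyMeasurable) (c := S / 2 * L)
      (fun θ => ?_)
    rw [Real.norm_eq_abs, abs_mul, abs_of_pos (hGpos t θ)]
    exact mul_le_mul (hfb θ) (hGub t ht θ) (hGpos t θ).le (by linarith)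
  have IfGr : ∀ t : ℝ, |t| ≤ 3 → Integrable (fun θ => (f θ * G t θ) • r θ) π := by
    intro t ht
    refine qb_aux_integrable (((hfm.mul (hGm t)).aestronglyMeasurable).smul hrm)
      (c := S / 2 * L * rbar) (fun θ => ?_)
    rw [norm_smul, Real.norm_eq_abs, abs_mul, abs_of_pos (hGpos t θ)]
    refine mul_le_mul ?_ (hrbd θ) (norm_nonneg _) (by positivity)
    exact mul_le_mul (hfb θ) (hGub t ht θ) (hGpos t θ).le (by linarith)
  set Z : ℝ → ℝ := fun t => ∫ θ, G t θ ∂π with hZdef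
  set N : ℝ → E := fun t => ∫ θ, G t θ • r θ ∂π with hNdef
  set Z' : ℝ → ℝ := fun t => ∫ θ, f θ * G t θ ∂π with hZ'def
  set N' : ℝ → E := fun t => ∫ θ, (f θ * G t θ) • r θ ∂π with hN'def
  set F : ℝ → E := fun t => (Z t)⁻¹ • N t with hFdef
  set F' : ℝ → E := fun t => (Z t)⁻¹ • N' t + (-Z' t / Z t ^ 2) • N t with hF'def
  have hZpos : ∀ t : ℝ, |t| ≤ 3 → 0 < Z t := by
    intro t ht
    have h2 : (0:ℝ) < Real.exp (-(MQ' + 3 * (MQ + MQ')) / 2) := Real.exp_pos _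
    calc (0:ℝ) < Real.exp (-(MQ' + 3 * (MQ + MQ')) / 2) := h2
    _ = ∫ _θ, Real.exp (-(MQ' + 3 * (MQ + MQ')) / 2) ∂π := by simp
    _ ≤ Z t := integral_mono (integrable_const _) (IG t ht) (hGlb t ht)
  have hIccabs : ∀ t ∈ Set.Icc (0:ℝ) 1, |t| ≤ 3 := by
    intro t ht
    rw [abs_le]
    exact ⟨by linarith [ht.1], by linarith [ht.2]⟩
  have hballabs : ∀ t ∈ Set.Icc (0:ℝ) 1, ∀ x ∈ Metric.ball t 1, |x| ≤ 3 := by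
    intro t ht x hx
    rw [Metric.mem_ball, Real.dist_eq] at hx
    calc |x| = |x - t + t| := by ring_nf
    _ ≤ |x - t| + |t| := abs_add_le _ _
    _ ≤ 3 := by
        have h4 : |t| ≤ 1 := by
          rw [abs_of_nonneg ht.1]; exact ht.2
        linarith [hx.le]
  have hZd : ∀ t ∈ Set.Icc (0:ℝ) 1, HasDerivAt Z (Z' t) t := by
    intro t ht
    have key := hasDerivAt_integral_of_dominated_loc_of_deriv_le (μ := π)
      (F := fun x θ => G x θ) (F' := fun x θ => f θ * G x θ) (x₀ := t)
      (bound := fun _ => S / 2 * L) (Metric.ball_mem_nhds t one_pos)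
      (Filter.Eventually.of_forall (fun x => (hGm x).aestronglyMeasurable))
      (IG t (hIccabs t ht))
      ((hfm.mul (hGm t)).aestronglyMeasurable)
      (Filter.Eventually.of_forall (fun θ x hx => ?_))
      (integrable_const _)
      (Filter.Eventually.of_forall (fun θ x _hx => hGd x θ))
    · exact key.2
    · rw [Real.norm_eq_abs, abs_mul, abs_of_pos (hGpos x θ)]
      exact mul_le_mul (hfb θ) (hGub x (hballabs t ht x hx) θ) (hGpos x θ).le (by linarith)
  have hNd : ∀ t ∈ Set.Icc (0:ℝ) 1, HasDerivAt N (N' t) t := by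
    intro t ht
    have key := hasDerivAt_integral_of_dominated_loc_of_deriv_le (μ := π)
      (F := fun x θ => G x θ • r θ) (F' := fun x θ => (f θ * G x θ) • r θ) (x₀ := t)
      (bound := fun _ => S / 2 * L * rbar) (Metric.ball_mem_nhds t one_pos)
      (Filter.Eventually.of_forall (fun x => (hGm x).aestronglyMeasurable.smul hrm))
      (IGr t (hIccabs t ht))
      (((hfm.mul (hGm t)).aestronglyMeasurable).smul hrm)
      (Filter.Eventually.of_forall (fun θ x hx => ?_))
      (integrable_const _)
      (Filter.Eventually.of_forall (fun θ x _hx => (hGd x θ).smul_const (r θ)))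
    · exact key.2
    · rw [norm_smul, Real.norm_eq_abs, abs_mul, abs_of_pos (hGpos x θ)]
      refine mul_le_mul ?_ (hrbd θ) (norm_nonneg _) (by positivity)
      exact mul_le_mul (hfb θ) (hGub x (hballabs t ht x hx) θ) (hGpos x θ).le (by linarith)
  have hFd : ∀ t ∈ Set.Icc (0:ℝ) 1, HasDerivAt F (F' t) t := by
    intro t ht
    exact ((hZd t ht).inv (ne_of_gt (hZpos t (hIccabs t ht)))).smul (hNd t ht)
  -- bound on the derivative
  have hF'b : ∀ t ∈ Set.Icc (0:ℝ) 1, ‖F' t‖ ≤ 1 / 2 * rbar * S := by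
    intro t ht
    have ht3 := hIccabs t ht
    have hZt := hZpos t ht3
    set c : ℝ := Z' t / Z t with hcdef
    have he : ∀ θ, ((f θ - c) * G t θ) • r θ = (f θ * G t θ) • r θ - c • (G t θ • r θ) := by
      intro θ
      rw [sub_mul, sub_smul, smul_smul]
    have hIcsub : Integrable (fun θ => ((f θ - c) * G t θ) • r θ) π := by
      refine (((IfGr t ht3).sub ((IGr t ht3).smul c)).congr
        (Filter.Eventually.of_forall (fun θ => ?_)))
      exact (he θ).symm
    have hIac : Integrable (fun θ => |f θ - c| * G t θ) π := by
      refine qb_aux_integrable (((hfm.sub measurable_const).abs.mul (hGm t)).aestronglyMeasurable)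
        (c := (S / 2 + |c|) * L) (fun θ => ?_)
      rw [Real.norm_eq_abs, abs_mul, abs_abs, abs_of_pos (hGpos t θ)]
      refine mul_le_mul ?_ (hGub t ht3 θ) (hGpos t θ).le (by positivity)
      exact (abs_sub (f θ) c).trans (add_le_add (hfb θ) le_rfl)
    have hrepr : (Z t)⁻¹ • (N' t - c • N t) = F' t := by
      have hZne : Z t ≠ 0 := ne_of_gt hZt
      have hsc : -((Z t)⁻¹ * c) = -Z' t / Z t ^ 2 := by
        rw [hcdef]
        field_simp
      rw [smul_sub, smul_smul, hF'def, sub_eq_add_neg, ← neg_smul, hsc]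
    have hint : ∫ θ, ((f θ - c) * G t θ) • r θ ∂π = N' t - c • N t := by
      have I2 : Integrable (fun θ => c • (G t θ • r θ)) π := (IGr t ht3).smul c
      simp_rw [he]
      rw [integral_sub (IfGr t ht3) I2, integral_smul]
    have hmad : ∫ θ, |f θ - c| * G t θ ∂π ≤ S / 2 * Z t := by
      have h := qb_aux_mad π f (G t) (S / 2) L (by linarith) hfm (hGm t) (hGpos t)
        (hGub t ht3) hfb (by simpa [hZdef] using hZt)
      simp only [hcdef, hZ'def, hZdef]
      simpa [hZdef] using h
    calc ‖F' t‖ = ‖(Z t)⁻¹ • ∫ θ, ((f θ - c) * G t θ) • r θ ∂π‖ := by rw [hint, hrepr]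
    _ = (Z t)⁻¹ * ‖∫ θ, ((f θ - c) * G t θ) • r θ ∂π‖ := by
        rw [norm_smul, Real.norm_eq_abs, abs_of_pos (inv_pos.mpr hZt)]
    _ ≤ (Z t)⁻¹ * ((S / 2 * Z t) * rbar) := by
        refine mul_le_mul_of_nonneg_left ?_ (inv_pos.mpr hZt).le
        calc ‖∫ θ, ((f θ - c) * G t θ) • r θ ∂π‖
            ≤ ∫ θ, ‖((f θ - c) * G t θ) • r θ‖ ∂π := norm_integral_le_integral_norm _
        _ ≤ ∫ θ, (|f θ - c| * G t θ) * rbar ∂π := by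
            refine integral_mono hIcsub.norm (hIac.mul_const rbar) (fun θ => ?_)
            rw [norm_smul, Real.norm_eq_abs, abs_mul, abs_of_pos (hGpos t θ)]
            exact mul_le_mul_of_nonneg_left (hrbd θ) (by positivity)
        _ = (∫ θ, |f θ - c| * G t θ ∂π) * rbar := integral_mul_const _ _
        _ ≤ (S / 2 * Z t) * rbar := mul_le_mul_of_nonneg_right hmad hrbar
    _ = 1 / 2 * rbar * S := by field_simp
  -- mean value inequality on [0,1]
  have mvt := (convex_Icc (0:ℝ) 1).norm_image_sub_le_of_norm_hasDerivWithin_le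
    (f := F) (f' := F') (fun x hx => (hFd x hx).hasDerivWithinAt) hF'b
    (Set.left_mem_Icc.mpr zero_le_one) (Set.right_mem_Icc.mpr zero_le_one)
  have hQ1 : ((∫ θ, Real.exp (-Q θ / 2) ∂π)⁻¹ • ∫ θ, Real.exp (-Q θ / 2) • r θ ∂π) = F 1 := by
    have e : ∀ θ, Real.exp (-Q θ / 2) = G 1 θ := fun θ => by
      rw [hGdef]
      simp only [hDdef]
      congr 1
      ring
    simp only [hFdef, hZdef, hNdef]
    simp_rw [e]
  have hQ0 : ((∫ θ, Real.exp (-Q' θ / 2) ∂π)⁻¹ • ∫ θ, Real.exp (-Q' θ / 2) • r θ ∂π) = F 0 := by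
    have e : ∀ θ, Real.exp (-Q' θ / 2) = G 0 θ := fun θ => by
      rw [hGdef]
      congr 1
      ring
    simp only [hFdef, hZdef, hNdef]
    simp_rw [e]
  rw [hQ1, hQ0]
  calc ‖F 1 - F 0‖ ≤ 1 / 2 * rbar * S * ‖(1:ℝ) - 0‖ := mvt
  _ = 1 / 2 * rbar * S := by norm_num

end Core


open MeasureTheory

/-- The quasi-Bayes posterior mean is Lipschitz in the objective function `Q`
with constant `(1/2) * rbar * √p`. -/
theorem quasiBayes_lipschitz_in_objective
    {Θ : Type*} [MeasurableSpace Θ] (π : Measure Θ) [IsProbabilityMeasure π]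
    (p : ℕ) (hp : 0 < p) (rbar : ℝ) (hrbar : 0 ≤ rbar)
    (r : Θ → EuclideanSpace ℝ (Fin p)) (hrmeas : Measurable r)
    (hrbd : ∀ θ, ‖r θ‖ ≤ rbar)
    (δ : (Θ → ℝ) → EuclideanSpace ℝ (Fin p))
    (hδ : ∀ Q : Θ → ℝ, δ Q =
      (∫ θ, Real.exp (-Q θ / 2) ∂π)⁻¹ • ∫ θ, Real.exp (-Q θ / 2) • r θ ∂π) :
    ∀ Q Q' : Θ → ℝ, Measurable Q → Measurable Q' →
      (∃ MQ : ℝ, ∀ θ, |Q θ| ≤ MQ) → (∃ MQ' : ℝ, ∀ θ, |Q' θ| ≤ MQ') →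
      ‖δ Q - δ Q'‖ ≤ (1 / 2) * rbar * Real.sqrt p * ⨆ θ, |Q θ - Q' θ| := by
  rintro Q Q' hQm hQ'm ⟨MQ, hMQ⟩ ⟨MQ', hMQ'⟩
  have hne : Nonempty Θ := by
    by_contra h
    have h2 := measure_univ (μ := π)
    rw [Set.univ_eq_empty_iff.mpr (not_nonempty_iff.mp h), measure_empty] at h2
    exact zero_ne_one h2
  set S : ℝ := ⨆ θ, |Q θ - Q' θ| with hSdef
  have hbdd : BddAbove (Set.range fun θ => |Q θ - Q' θ|) := by
    refine ⟨MQ + MQ', ?_⟩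
    rintro y ⟨θ, rfl⟩
    exact (abs_sub (Q θ) (Q' θ)).trans (add_le_add (hMQ θ) (hMQ' θ))
  have hDb : ∀ θ, |Q θ - Q' θ| ≤ S := fun θ => le_ciSup hbdd θ
  have hS0 : 0 ≤ S := le_trans (abs_nonneg _) (hDb (Classical.arbitrary Θ))
  have hrm : AEStronglyMeasurable r π := hrmeas.aestronglyMeasurable
  rw [hδ Q, hδ Q']
  have hcore := qb_core π rbar hrbar r hrm hrbd Q Q' hQm hQ'm MQ MQ' hMQ hMQ' S hS0 hDb
  refine hcore.trans ?_
  have hsq : 1 ≤ Real.sqrt p := by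
    rw [show (1:ℝ) = Real.sqrt 1 by simp]
    exact Real.sqrt_le_sqrt (by exact_mod_cast hp)
  nlinarith [mul_nonneg (mul_nonneg (sub_nonneg.mpr hsq) hrbar) hS0]
end

section
/- Let θ₁, θ₂, a, b be real numbers with a ≠ b. For C ∈ ℝ define δ_C = (θ₁·exp(−a²/2 − (b−C)²/2) + θ₂·exp(−b²/2 − (a−C)²/2)) / (exp(−a²/2 − (b−C)²/2) + exp(−b²/2 − (a−C)²/2)). Then as C → ∞, δ_C converges to θ₁ if a < b, and to θ₂ if b < a. -/
open Filter Real

private lemma aux_tendsto (x y t : ℝ) (ht : t < 0) :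
    Tendsto (fun C : ℝ => (x + y * Real.exp (C * t)) / (1 + Real.exp (C * t)))
      atTop (nhds x) := by
  have h0 : Tendsto (fun C : ℝ => Real.exp (C * t)) atTop (nhds 0) := by
    have : Tendsto (fun C : ℝ => C * t) atTop atBot :=
      Filter.Tendsto.atTop_mul_const_of_neg ht tendsto_id
    exact Real.tendsto_exp_atBot.comp this
  have : Tendsto (fun C : ℝ => (x + y * Real.exp (C * t)) / (1 + Real.exp (C * t)))
      atTop (nhds ((x + y * 0) / (1 + 0))) := by
    apply Tendsto.div
    · exact tendsto_const_nhds.add (tendsto_const_nhds.mul h0)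
    · exact tendsto_const_nhds.add h0
    · norm_num
  simpa using this

/-- Without bounds on identification strength, Bayes posterior means can
converge to the step function selecting the argmin of the moments. -/
theorem bayes_posterior_mean_limit_step
    (θ1 θ2 a b : ℝ) (hab : a ≠ b)
    (δ : ℝ → ℝ)
    (hδ : ∀ C : ℝ, δ C =
      (θ1 * Real.exp (-a ^ 2 / 2 - (b - C) ^ 2 / 2) +
        θ2 * Real.exp (-b ^ 2 / 2 - (a - C) ^ 2 / 2)) /
      (Real.exp (-a ^ 2 / 2 - (b - C) ^ 2 / 2) +
        Real.exp (-b ^ 2 / 2 - (a - C) ^ 2 / 2))) :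
    (a < b → Filter.Tendsto δ Filter.atTop (nhds θ1)) ∧
    (b < a → Filter.Tendsto δ Filter.atTop (nhds θ2)) := by
  constructor
  · intro h
    have key : ∀ C : ℝ, δ C =
        (θ1 + θ2 * Real.exp (C * (a - b))) / (1 + Real.exp (C * (a - b))) := by
      intro C
      rw [hδ C]
      have hE : Real.exp (-b ^ 2 / 2 - (a - C) ^ 2 / 2) =
          Real.exp (-a ^ 2 / 2 - (b - C) ^ 2 / 2) * Real.exp (C * (a - b)) := by
        rw [← Real.exp_add]; ring_nf
      rw [hE]
      have hne : Real.exp (-a ^ 2 / 2 - (b - C) ^ 2 / 2) ≠ 0 := (Real.exp_pos _).ne'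
      have hd : 0 < 1 + Real.exp (C * (a - b)) := by positivity
      field_simp
    rw [show δ = fun C => (θ1 + θ2 * Real.exp (C * (a - b))) / (1 + Real.exp (C * (a - b)))
      from funext key]
    exact aux_tendsto θ1 θ2 (a - b) (by linarith)
  · intro h
    have key : ∀ C : ℝ, δ C =
        (θ2 + θ1 * Real.exp (C * (b - a))) / (1 + Real.exp (C * (b - a))) := by
      intro C
      rw [hδ C]
      have hE : Real.exp (-a ^ 2 / 2 - (b - C) ^ 2 / 2) =
          Real.exp (-b ^ 2 / 2 - (a - C) ^ 2 / 2) * Real.exp (C * (b - a)) := by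
        rw [← Real.exp_add]; ring_nf
      rw [hE]
      have hne : Real.exp (-b ^ 2 / 2 - (a - C) ^ 2 / 2) ≠ 0 := (Real.exp_pos _).ne'
      have hd : 0 < 1 + Real.exp (C * (b - a)) := by positivity
      field_simp
      ring
    rw [show δ = fun C => (θ2 + θ1 * Real.exp (C * (b - a))) / (1 + Real.exp (C * (b - a)))
      from funext key]
    exact aux_tendsto θ2 θ1 (b - a) (by linarith)
end

section
/- Let E be a real normed vector space, p a positive natural number, W ≥ 0 and r̄ ≥ 0. Say that a function δ : E → EuclideanSpace ℝ (Fin p) is of softmax posterior-mean form with parameters (W, r̄) if there exist a nonempty finite index set J and, for each j ∈ J, a continuous linear functional η_j on E with ‖η_j‖ ≤ W, constants c_j ∈ ℝ, weights π_j > 0, and vectors r_j with ‖r_j‖ ≤ r̄, such that δ(w) = (∑_j π_j·exp(η_j(w) − c_j)·r_j)/(∑_j π_j·exp(η_j(w) − c_j)) for all w. Suppose (δ_s)_{s∈ℕ} is a sequence of functions, each of softmax posterior-mean form with parameters (W, r̄), and suppose (δ_s(w)) converges for every w in a dense subset D of E. Then (δ_s(w)) converges for every w ∈ E, and the pointwise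 limit δ* : E → EuclideanSpace ℝ (Fin p) is Lipschitz with constant r̄·√p·W. -/
set_option maxHeartbeats 1000000


open scoped BigOperators

/-- A function is of softmax posterior-mean form with parameters `(W, rbar)` if
it is a Bayes posterior mean for a finitely supported prior whose
likelihood-ratio functionals are bounded in dual norm by `W` and whose estimand
values are bounded in norm by `rbar`. -/
def SoftmaxPosteriorMeanForm {E : Type*} [NormedAddCommGroup E] [NormedSpace ℝ E]
    (p : ℕ) (W rbar : ℝ) (δ : E → EuclideanSpace ℝ (Fin p)) : Prop :=
  ∃ (m : ℕ), 0 < m ∧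
    ∃ (η : Fin m → E →L[ℝ] ℝ) (c : Fin m → ℝ) (pj : Fin m → ℝ)
      (r : Fin m → EuclideanSpace ℝ (Fin p)),
      (∀ j, ‖η j‖ ≤ W) ∧ (∀ j, 0 < pj j) ∧ (∀ j, ‖r j‖ ≤ rbar) ∧
      ∀ w, δ w = (∑ j, pj j * Real.exp (η j w - c j))⁻¹ •
        ∑ j, (pj j * Real.exp (η j w - c j)) • r j

lemma softmaxForm_lip {E : Type*} [NormedAddCommGroup E] [NormedSpace ℝ E]
    {p : ℕ} {W rbar : ℝ} (hW : 0 ≤ W) (hrbar : 0 ≤ rbar)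
    {δ : E → EuclideanSpace ℝ (Fin p)} (h : SoftmaxPosteriorMeanForm p W rbar δ) :
    ∀ w w' : E, ‖δ w - δ w'‖ ≤ rbar * W * ‖w - w'‖ := by
  obtain ⟨m, hm, η, c, pj, r, hη, hpj, hr, hδ⟩ := h
  set a : E → Fin m → ℝ := fun w j => pj j * Real.exp (η j w - c j) with ha
  have hapos : ∀ w j, 0 < a w j := fun w j => mul_pos (hpj j) (Real.exp_pos _)
  set A : E → ℝ := fun w => ∑ j, a w j with hAdef
  have hApos : ∀ w, 0 < A w :=
    fun w => Finset.sum_pos (fun j _ => hapos w j) ⟨⟨0, hm⟩, Finset.mem_univ _⟩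
  set S : E → EuclideanSpace ℝ (Fin p) := fun w => ∑ j, a w j • r j with hSdef
  set f : E → EuclideanSpace ℝ (Fin p) := fun w => (A w)⁻¹ • S w with hfdef
  have hδf : ∀ w, δ w = f w := fun w => hδ w
  set A' : E → E →L[ℝ] ℝ := fun w => ∑ j, a w j • η j with hA'def
  set S' : E → E →L[ℝ] EuclideanSpace ℝ (Fin p) :=
    fun w => ∑ j, (a w j • η j).smulRight (r j) with hS'def
  set Φ : E → E →L[ℝ] EuclideanSpace ℝ (Fin p) :=
    fun w => (A w)⁻¹ • S' w + ((-((A w) ^ 2)⁻¹) • A' w).smulRight (S w) with hΦdef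
  have haj : ∀ (w : E) (j : Fin m), HasFDerivAt (fun w => a w j) (a w j • η j) w := by
    intro w j
    have h0 : HasFDerivAt (fun w => η j w - c j) (η j) w := (η j).hasFDerivAt.sub_const _
    have h2 := h0.exp.const_mul (pj j)
    simpa [ha, smul_smul] using h2
  have hA : ∀ w, HasFDerivAt A (A' w) w :=
    fun w => HasFDerivAt.fun_sum (fun j _ => haj w j)
  have hS : ∀ w, HasFDerivAt S (S' w) w :=
    fun w => HasFDerivAt.fun_sum (fun j _ => (haj w j).smul_const (r j))
  have hf : ∀ w, HasFDerivAt f (Φ w) w := by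
    intro w
    have hinv : HasFDerivAt (fun w => (A w)⁻¹) ((-((A w) ^ 2)⁻¹) • A' w) w :=
      (hasDerivAt_inv (hApos w).ne').comp_hasFDerivAt w (hA w)
    exact hinv.smul (hS w)
  have hbound : ∀ w : E, ‖Φ w‖ ≤ rbar * W := by
    intro w
    refine ContinuousLinearMap.opNorm_le_bound _ (by positivity) (fun v => ?_)
    have hAne : A w ≠ 0 := (hApos w).ne'
    set q : Fin m → ℝ := fun j => a w j / A w with hqdef
    have hq0 : ∀ j, 0 ≤ q j := fun j => le_of_lt (div_pos (hapos w j) (hApos w))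
    have hq1 : ∑ j, q j = 1 := by
      rw [hqdef]
      rw [← Finset.sum_div]
      exact div_self hAne
    set μ : EuclideanSpace ℝ (Fin p) := f w with hμdef
    have hμ : μ = ∑ j, q j • r j := by
      rw [hμdef, hfdef]
      simp only [hSdef, Finset.smul_sum, smul_smul, hqdef, div_eq_inv_mul]
    have hS'v : S' w v = ∑ j, (a w j * η j v) • r j := by
      simp [hS'def, ContinuousLinearMap.sum_apply, ContinuousLinearMap.smulRight_apply,
        ContinuousLinearMap.smul_apply, smul_eq_mul]
    have hA'v : A' w v = ∑ j, a w j * η j v := by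
      simp [hA'def, ContinuousLinearMap.sum_apply, ContinuousLinearMap.smul_apply,
        smul_eq_mul]
    have hApp : Φ w v = (A w)⁻¹ • (S' w v) + ((-((A w) ^ 2)⁻¹) * (A' w v)) • S w := by
      simp [hΦdef, ContinuousLinearMap.add_apply, ContinuousLinearMap.smul_apply,
        ContinuousLinearMap.smulRight_apply, smul_eq_mul]
    have key : Φ w v = ∑ j, (q j * η j v) • (r j - μ) := by
      have hrhs : ∑ j, (q j * η j v) • (r j - μ)
          = (∑ j, (q j * η j v) • r j) - (∑ j, q j * η j v) • μ := by
        rw [Finset.sum_smul, ← Finset.sum_sub_distrib]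
        exact Finset.sum_congr rfl fun j _ => smul_sub _ _ _
      have hT1 : (A w)⁻¹ • (S' w v) = ∑ j, (q j * η j v) • r j := by
        rw [hS'v, Finset.smul_sum]
        refine Finset.sum_congr rfl fun j _ => ?_
        rw [smul_smul]
        congr 1
        rw [hqdef]
        field_simp
      have hT2 : ((-((A w) ^ 2)⁻¹) * (A' w v)) • S w = -(((∑ j, q j * η j v) • μ)) := by
        have hμS : μ = (A w)⁻¹ • S w := rfl
        rw [hμS, hA'v, smul_smul, ← neg_smul]
        congr 1
        have hsd : ∑ j, q j * η j v = (∑ j, a w j * η j v) / A w := by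
          rw [Finset.sum_div]
          exact Finset.sum_congr rfl fun j _ => (div_mul_eq_mul_div _ _ _)
        rw [hsd, sq, mul_inv, div_eq_mul_inv]
        ring
      rw [hApp, hrhs, hT1, hT2]
      abel
    rw [key]
    have habs : ∀ j : Fin m, |η j v| ≤ W * ‖v‖ := by
      intro j
      calc |η j v| ≤ ‖η j‖ * ‖v‖ := (η j).le_opNorm v
        _ ≤ W * ‖v‖ := by gcongr; exact hη j
    calc ‖∑ j, (q j * η j v) • (r j - μ)‖
        ≤ ∑ j, ‖(q j * η j v) • (r j - μ)‖ := norm_sum_le _ _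
      _ = ∑ j, (Real.sqrt (q j) * |η j v|) * (Real.sqrt (q j) * ‖r j - μ‖) := by
          refine Finset.sum_congr rfl fun j _ => ?_
          rw [norm_smul, Real.norm_eq_abs, abs_mul, abs_of_nonneg (hq0 j)]
          nth_rewrite 1 [show q j = Real.sqrt (q j) * Real.sqrt (q j) from
            (Real.mul_self_sqrt (hq0 j)).symm]
          ring
      _ ≤ Real.sqrt (∑ j, (Real.sqrt (q j) * |η j v|)^2)
          * Real.sqrt (∑ j, (Real.sqrt (q j) * ‖r j - μ‖)^2) :=
          Real.sum_mul_le_sqrt_mul_sqrt _ _ _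
      _ = Real.sqrt (∑ j, q j * (η j v)^2) * Real.sqrt (∑ j, q j * ‖r j - μ‖^2) := by
          congr 2 <;> refine Finset.sum_congr rfl fun j _ => by
            simp [mul_pow, Real.sq_sqrt (hq0 j), sq_abs]
      _ ≤ Real.sqrt ((W * ‖v‖)^2) * Real.sqrt (rbar^2) := by
          gcongr
          · -- ∑ q (η v)^2 ≤ (W‖v‖)^2
            calc ∑ j, q j * (η j v)^2 ≤ ∑ j, q j * (W * ‖v‖)^2 := by
                  refine Finset.sum_le_sum fun j _ => ?_
                  have h1 : (η j v)^2 ≤ (W * ‖v‖)^2 := by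
                    rw [← sq_abs (η j v)]
                    exact pow_le_pow_left₀ (abs_nonneg _) (habs j) 2
                  exact mul_le_mul_of_nonneg_left h1 (hq0 j)
              _ = (W * ‖v‖)^2 := by rw [← Finset.sum_mul, hq1, one_mul]
          · -- variance bound
            have hvar : ∑ j, q j * ‖r j - μ‖^2
                = (∑ j, q j * ‖r j‖^2) - ‖μ‖^2 := by
              have hns : ∀ j : Fin m, ‖r j - μ‖^2
                  = ‖r j‖^2 - 2 * (inner ℝ (r j) μ : ℝ) + ‖μ‖^2 := fun j => norm_sub_sq_real _ _
              have hsum : ∑ j, q j * (inner ℝ (r j) μ : ℝ) = (‖μ‖:ℝ)^2 := by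
                have : (∑ j, q j * (inner ℝ (r j) μ : ℝ)) = (inner ℝ μ μ : ℝ) := by
                  rw [hμ, sum_inner]
                  refine Finset.sum_congr rfl fun j _ => ?_
                  rw [real_inner_smul_left]
                rw [this, real_inner_self_eq_norm_sq]
              calc ∑ j, q j * ‖r j - μ‖^2
                  = ∑ j, (q j * ‖r j‖^2 - 2 * (q j * (inner ℝ (r j) μ : ℝ)) + q j * ‖μ‖^2) := by
                    refine Finset.sum_congr rfl fun j _ => ?_
                    rw [hns j]; ring
                _ = (∑ j, q j * ‖r j‖^2) - 2 * (∑ j, q j * (inner ℝ (r j) μ : ℝ))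
                    + (∑ j, q j) * ‖μ‖^2 := by
                    rw [Finset.sum_add_distrib, Finset.sum_sub_distrib, Finset.mul_sum,
                      Finset.sum_mul]
                _ = (∑ j, q j * ‖r j‖^2) - ‖μ‖^2 := by
                    rw [hsum, hq1]; ring
            rw [hvar]
            have : ∑ j, q j * ‖r j‖^2 ≤ rbar^2 := by
              calc ∑ j, q j * ‖r j‖^2 ≤ ∑ j, q j * rbar^2 := by
                    refine Finset.sum_le_sum fun j _ => ?_
                    have h1 : ‖r j‖^2 ≤ rbar^2 :=
                      pow_le_pow_left₀ (norm_nonneg _) (hr j) 2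
                    exact mul_le_mul_of_nonneg_left h1 (hq0 j)
                _ = rbar^2 := by rw [← Finset.sum_mul, hq1, one_mul]
            nlinarith [sq_nonneg ‖μ‖]
      _ = rbar * W * ‖v‖ := by
          rw [Real.sqrt_sq (by positivity), Real.sqrt_sq hrbar]; ring
  intro w w'
  rw [hδf w, hδf w']
  exact Convex.norm_image_sub_le_of_norm_hasFDerivWithin_le
    (fun x _ => (hf x).hasFDerivWithinAt) (fun x _ => hbound x) convex_univ
    (Set.mem_univ w') (Set.mem_univ w)

/-- Pointwise limits (on a dense set) of softmax posterior-mean form estimators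
converge everywhere and are Lipschitz with constant `rbar * √p * W`. -/
theorem softmax_posterior_mean_limit_lipschitz
    {E : Type*} [NormedAddCommGroup E] [NormedSpace ℝ E]
    (p : ℕ) (hp : 0 < p) (W rbar : ℝ) (hW : 0 ≤ W) (hrbar : 0 ≤ rbar)
    (δ : ℕ → E → EuclideanSpace ℝ (Fin p))
    (hform : ∀ s : ℕ, SoftmaxPosteriorMeanForm p W rbar (δ s))
    (D : Set E) (hD : Dense D)
    (hconv : ∀ w ∈ D, ∃ l, Filter.Tendsto (fun s => δ s w) Filter.atTop (nhds l)) :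
    ∃ δstar : E → EuclideanSpace ℝ (Fin p),
      (∀ w : E, Filter.Tendsto (fun s => δ s w) Filter.atTop (nhds (δstar w))) ∧
      ∀ w w' : E, ‖δstar w - δstar w'‖ ≤ rbar * Real.sqrt p * W * ‖w - w'‖ := by
  have hlip : ∀ (s : ℕ) (w w' : E), ‖δ s w - δ s w'‖ ≤ rbar * W * ‖w - w'‖ :=
    fun s => softmaxForm_lip hW hrbar (hform s)
  have hcau : ∀ w : E, CauchySeq (fun s => δ s w) := by
    intro w
    rw [Metric.cauchySeq_iff]
    intro ε hε
    have hr4 : (0:ℝ) < ε / 4 / (rbar * W + 1) := by positivity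
    obtain ⟨w', hw'D, hw'⟩ : ∃ w' ∈ D, dist w w' < ε / 4 / (rbar * W + 1) := by
      obtain ⟨y, hy⟩ := Metric.dense_iff.mp hD w _ hr4
      exact ⟨y, hy.2, by have := hy.1; rwa [Metric.mem_ball, dist_comm] at this⟩
    obtain ⟨l, hl⟩ := hconv w' hw'D
    obtain ⟨N, hN⟩ := Metric.cauchySeq_iff.mp hl.cauchySeq (ε / 2) (by positivity)
    refine ⟨N, fun s hs t ht => ?_⟩
    have hdd : ∀ u : ℕ, dist (δ u w) (δ u w') ≤ ε / 4 := by
      intro u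
      rw [dist_eq_norm]
      calc ‖δ u w - δ u w'‖ ≤ rbar * W * ‖w - w'‖ := hlip u w w'
        _ ≤ (rbar * W + 1) * (ε / 4 / (rbar * W + 1)) := by
            rw [← dist_eq_norm]
            apply mul_le_mul (by linarith) hw'.le dist_nonneg (by positivity)
        _ = ε / 4 := by field_simp
    have htri := dist_triangle4 (δ s w) (δ s w') (δ t w') (δ t w)
    have hmid := hN s hs t ht
    have h1 := hdd s
    have h2 := hdd t
    rw [dist_comm (δ t w') (δ t w)] at htri
    linarith
  set δstar : E → EuclideanSpace ℝ (Fin p) :=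
    fun w => Filter.limUnder Filter.atTop (fun s => δ s w) with hδstar
  have htend : ∀ w : E, Filter.Tendsto (fun s => δ s w) Filter.atTop (nhds (δstar w)) :=
    fun w => (hcau w).tendsto_limUnder
  refine ⟨δstar, htend, fun w w' => ?_⟩
  have hle : ‖δstar w - δstar w'‖ ≤ rbar * W * ‖w - w'‖ := by
    have hnt : Filter.Tendsto (fun s => ‖δ s w - δ s w'‖) Filter.atTop
        (nhds ‖δstar w - δstar w'‖) := ((htend w).sub (htend w')).norm
    exact le_of_tendsto hnt (Filter.Eventually.of_forall fun s => hlip s w w')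
  refine hle.trans ?_
  have h1 : (1:ℝ) ≤ Real.sqrt p := by
    rw [show (1:ℝ) = Real.sqrt 1 by simp]
    exact Real.sqrt_le_sqrt (by exact_mod_cast hp)
  calc rbar * W * ‖w - w'‖ = rbar * 1 * W * ‖w - w'‖ := by ring
    _ ≤ rbar * Real.sqrt p * W * ‖w - w'‖ := by
        gcongr
end
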